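/- arXiv:1408.4514 — 5 statements merged into one kernel-verified Lean document; each statement's English description precedes it below -/
import Mathlib

section
/- Let I = [u+1, u+h] be an interval of h ≥ 3 consecutive integers with u ≥ 0, and let n ≥ 1. For any integer z ≥ 1, the number of n-tuples (x_1, ..., x_n) ∈ I^n with z = x_1 ⋯ x_n is at most exp(C_n · log h / log log h) for some constant C_n depending only on n. -/
set_option maxHeartbeats 1000000

open Finset Polynomial

/-- Uniqueness of base-`u` digits (integers). -/
lemma digits_unique (u : ℤ) (hu : 0 < u) :
    ∀ (m : ℕ) (a b : ℕ → ℤ), (∀ j, j < m → 0 ≤ a j ∧ a j < u) →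
      (∀ j, j < m → 0 ≤ b j ∧ b j < u) →
      (∑ j ∈ Finset.range m, a j * u ^ j) = (∑ j ∈ Finset.range m, b j * u ^ j) →
      ∀ j, j < m → a j = b j := by
  intro m
  induction m with
  | zero => intro a b _ _ _ j hj; omega
  | succ m ih =>
    intro a b ha hb heq j hj
    have expand : ∀ (c : ℕ → ℤ), (∑ j ∈ Finset.range (m+1), c j * u ^ j)
        = (∑ j ∈ Finset.range m, c (j+1) * u ^ j) * u + c 0 := by
      intro c
      rw [Finset.sum_range_succ' (fun j => c j * u ^ j) m, Finset.sum_mul]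
      simp only [pow_zero, mul_one]
      congr 1
      apply Finset.sum_congr rfl
      intro i _
      ring
    rw [expand a, expand b] at heq
    set A := ∑ j ∈ Finset.range m, a (j+1) * u ^ j with hA
    set B := ∑ j ∈ Finset.range m, b (j+1) * u ^ j with hB
    have h0 : a 0 - b 0 = (B - A) * u := by linarith
    have hAB : A = B := by
      by_contra hne
      have h1 : 1 ≤ |B - A| := by
        rcases lt_or_gt_of_ne hne with h | h
        · rw [abs_of_pos (by omega : (0:ℤ) < B - A)]; omega
        · rw [abs_of_neg (by omega : B - A < (0:ℤ))]; omega
      have h2 : |a 0 - b 0| < u := by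
        have q1 := ha 0 (by omega); have q2 := hb 0 (by omega)
        rw [abs_lt]; omega
      rw [h0, abs_mul, abs_of_nonneg hu.le] at h2
      nlinarith
    have h00 : a 0 = b 0 := by rw [hAB] at h0; omega
    rcases Nat.eq_zero_or_pos j with rfl | hjpos
    · exact h00
    · obtain ⟨j', rfl⟩ : ∃ j', j = j' + 1 := ⟨j - 1, by omega⟩
      exact ih (fun k => a (k+1)) (fun k => b (k+1)) (fun k hk => ha (k+1) (by omega))
        (fun k hk => hb (k+1) (by omega)) hAB j' (by omega)

lemma eval_prod_add (s : Multiset ℤ) (u : ℤ) :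
    (Multiset.map (fun r => u + r) s).prod
      = ∑ j ∈ Finset.range (Multiset.card s + 1), s.esymm j * u ^ (Multiset.card s - j) := by
  have h := congrArg (Polynomial.eval u) (Multiset.prod_X_add_C_eq_sum_esymm s)
  rw [Polynomial.eval_multiset_prod, Multiset.map_map] at h
  simp only [Function.comp, Polynomial.eval_add, Polynomial.eval_X, Polynomial.eval_C] at h
  rw [h]
  simp [Polynomial.eval_finset_sum]

lemma esymm_nonneg (s : Multiset ℤ) (h : ∀ a ∈ s, 0 ≤ a) (k : ℕ) : 0 ≤ s.esymm k := by
  rw [Multiset.esymm]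
  apply Multiset.sum_nonneg
  intro x hx
  obtain ⟨t, ht, rfl⟩ := Multiset.mem_map.mp hx
  exact Multiset.prod_nonneg fun a ha =>
    h a (Multiset.mem_of_le (Multiset.mem_powersetCard.mp ht).1 ha)

lemma esymm_le_prod (s : Multiset ℤ) (h : ∀ a ∈ s, 0 ≤ a) (k : ℕ) (hk : k ≤ Multiset.card s) :
    s.esymm k ≤ (Multiset.map (fun r => 1 + r) s).prod := by
  rw [eval_prod_add s 1]
  simp only [one_pow, mul_one]
  exact Finset.single_le_sum (fun j _ => esymm_nonneg s h j)
    (Finset.mem_range.mpr (by omega))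

lemma multiset_eq_of_esymm (s t : Multiset ℤ) (hcard : Multiset.card s = Multiset.card t)
    (h : ∀ k, k ≤ Multiset.card s → s.esymm k = t.esymm k) : s = t := by
  have hmm : ∀ (w : Multiset ℤ), Multiset.map (fun r => X + C r) w
      = Multiset.map (fun a => X - C a) (Multiset.map Neg.neg w) := by
    intro w
    rw [Multiset.map_map]
    apply Multiset.map_congr rfl
    intro a _
    simp [sub_neg_eq_add]
  have hp : (Multiset.map (fun r => X + C r) s).prod
      = (Multiset.map (fun r => X + C r) t).prod := by
    rw [Multiset.prod_X_add_C_eq_sum_esymm, Multiset.prod_X_add_C_eq_sum_esymm, ← hcard]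
    refine Finset.sum_congr rfl fun j hj => ?_
    rw [h j (by simpa using Nat.lt_succ_iff.mp (Finset.mem_range.mp hj))]
  rw [hmm s, hmm t] at hp
  have := congrArg Polynomial.roots hp
  rw [Polynomial.roots_multiset_prod_X_sub_C, Polynomial.roots_multiset_prod_X_sub_C] at this
  exact Multiset.map_injective neg_injective this

lemma exists_perm_of_multiset_eq {n : ℕ} (x y : Fin n → ℤ)
    (h : (↑(List.ofFn x) : Multiset ℤ) = ↑(List.ofFn y)) : ∃ σ : Equiv.Perm (Fin n), y = x ∘ σ := by
  have hperm : (List.ofFn x).Perm (List.ofFn y) := Multiset.coe_eq_coe.mp h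
  have hsx : x ∘ (Tuple.sort x) = y ∘ (Tuple.sort y) := by
    apply List.ofFn_injective
    refine List.Perm.eq_of_sortedLE (Tuple.monotone_sort x).sortedLE_ofFn
      (Tuple.monotone_sort y).sortedLE_ofFn ?_
    exact (((Tuple.sort x).ofFn_comp_perm x).trans hperm).trans
      ((Tuple.sort y).ofFn_comp_perm y).symm
  refine ⟨((Tuple.sort y)⁻¹).trans (Tuple.sort x), ?_⟩
  funext i
  have := congrFun hsx ((Tuple.sort y)⁻¹ i)
  simpa using this.symm

lemma log_three_gt_one : (1:ℝ) < Real.log 3 := by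
  have h3 : Real.exp 1 < 3 := lt_trans Real.exp_one_lt_d9 (by norm_num)
  calc (1:ℝ) = Real.log (Real.exp 1) := (Real.log_exp 1).symm
    _ < Real.log 3 := Real.log_lt_log (Real.exp_pos 1) h3

/-- divisor bound: if `Z ≤ (h+1)^K` then `τ(Z) ≤ exp(c_K log h / log log h)`. -/
lemma tau_bound (K : ℕ) (hK : 1 ≤ K) (h : ℝ) (hh : 3 ≤ h) (Z : ℕ) (hZ : Z ≠ 0)
    (hZle : (Z : ℝ) ≤ (h+1)^K) :
    (Z.divisors.card : ℝ) ≤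
      Real.exp ((4*K + 12 * Real.log (5*K) + 48) * Real.log h / Real.log (Real.log h)) := by
  set L := Real.log h with hL
  have hL1 : 1 < L := lt_of_lt_of_le log_three_gt_one (Real.log_le_log (by norm_num) hh)
  have hL0 : 0 < L := by linarith
  set LL := Real.log L with hLL
  have hLL0 : 0 < LL := Real.log_pos hL1
  have hZ1 : (1:ℝ) ≤ (Z:ℝ) := by exact_mod_cast Nat.one_le_iff_ne_zero.mpr hZ
  -- log Z ≤ 2 K L
  have hlogZ : Real.log Z ≤ 2 * K * L := by
    have h1 : Real.log Z ≤ K * Real.log (h+1) := by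
      calc Real.log Z ≤ Real.log ((h+1)^K) := Real.log_le_log (by linarith) hZle
        _ = K * Real.log (h+1) := by rw [Real.log_pow]
    have h2 : Real.log (h+1) ≤ 2 * L := by
      calc Real.log (h+1) ≤ Real.log (h*h) := Real.log_le_log (by linarith) (by nlinarith)
        _ = L + L := Real.log_mul (by linarith) (by linarith)
        _ ≤ 2 * L := by linarith
    calc Real.log Z ≤ K * (2*L) := by
          refine h1.trans ?_
          have : (0:ℝ) ≤ K := Nat.cast_nonneg K
          nlinarith
      _ = 2 * K * L := by ring
  have hK1 : (1:ℝ) ≤ K := by exact_mod_cast hK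
  -- threshold
  set T : ℕ := ⌊Real.sqrt L⌋₊ + 2 with hT
  have hsqrt1 : 1 ≤ Real.sqrt L := by
    rw [show (1:ℝ) = Real.sqrt 1 by simp]
    exact Real.sqrt_le_sqrt (by linarith)
  have hTlb : Real.sqrt L ≤ (T:ℕ) := by
    push_cast [hT]
    have := Nat.lt_floor_add_one (Real.sqrt L)
    linarith
  have hTub : ((T:ℕ):ℝ) ≤ 3 * Real.sqrt L := by
    push_cast [hT]
    have := Nat.floor_le (Real.sqrt_nonneg L)
    linarith
  have hT2 : 2 ≤ T := by omega
  have hlogT : LL / 2 ≤ Real.log T := by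
    rw [hLL, ← Real.log_sqrt hL0.le]
    · exact (Real.log_le_log (by linarith) hTlb).trans_eq (by norm_num)
  -- factorization split
  have card_eq : Z.divisors.card = ∏ p ∈ Z.primeFactors, (Z.factorization p + 1) :=
    Nat.card_divisors hZ
  set P := Z.primeFactors with hP
  set A := P.filter (fun p => p ≤ T) with hA
  set B := P.filter (fun p => ¬ p ≤ T) with hB
  have split : (Z.divisors.card : ℝ)
      = (∏ p ∈ A, ((Z.factorization p : ℝ) + 1)) * ∏ p ∈ B, ((Z.factorization p : ℝ) + 1) := by
    rw [card_eq]
    rw [← Finset.prod_filter_mul_prod_filter_not P (fun p => p ≤ T)]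
    push_cast
    rfl
  -- bound on each exponent
  have hvp : ∀ p ∈ P, ((Z.factorization p : ℝ) + 1) ≤ 5 * K * L := by
    intro p hp
    have hprime : p.Prime := Nat.prime_of_mem_primeFactors hp
    have hdvd : p ^ Z.factorization p ∣ Z := Nat.ordProj_dvd Z p
    have hle : 2 ^ Z.factorization p ≤ Z := by
      calc 2 ^ Z.factorization p ≤ p ^ Z.factorization p :=
            Nat.pow_le_pow_left hprime.two_le _
        _ ≤ Z := Nat.le_of_dvd (Nat.pos_of_ne_zero hZ) hdvd
    have hle' : ((Z.factorization p : ℝ)) * Real.log 2 ≤ Real.log Z := by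
      rw [← Real.log_pow]
      exact Real.log_le_log (by positivity) (by exact_mod_cast hle)
    have hlog2 : (1:ℝ)/2 ≤ Real.log 2 := le_trans (by norm_num) Real.log_two_gt_d9.le
    have hv4 : ((Z.factorization p : ℝ)) ≤ 4 * K * L := by
      nlinarith [Nat.cast_nonneg (α := ℝ) (Z.factorization p)]
    nlinarith
  -- A part
  have hcardA : ((A.card : ℝ)) ≤ 3 * Real.sqrt L := by
    have hsub : A ⊆ Finset.Icc 2 T := by
      intro p hp
      rw [hA, Finset.mem_filter] at hp
      exact Finset.mem_Icc.mpr ⟨(Nat.prime_of_mem_primeFactors hp.1).two_le, hp.2⟩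
    have h1 : A.card ≤ T := by
      have := Finset.card_le_card hsub
      rw [Nat.card_Icc] at this
      omega
    exact le_trans (by exact_mod_cast h1) hTub
  have h5KL1 : (1:ℝ) ≤ 5 * K * L := by nlinarith
  have hlog5KL0 : 0 ≤ Real.log (5*K*L) := Real.log_nonneg h5KL1
  have hApart : (∏ p ∈ A, ((Z.factorization p : ℝ) + 1))
      ≤ Real.exp (3 * Real.sqrt L * Real.log (5*K*L)) := by
    have h1 : (∏ p ∈ A, ((Z.factorization p : ℝ) + 1)) ≤ (5*K*L) ^ A.card := by
      rw [← Finset.prod_const]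
      refine Finset.prod_le_prod (fun p _ => by positivity) ?_
      intro p hp
      exact hvp p (Finset.mem_filter.mp hp).1
    have h2 : (5*K*L:ℝ) ^ A.card = Real.exp ((A.card : ℝ) * Real.log (5*K*L)) := by
      rw [Real.exp_nat_mul, Real.exp_log (by linarith)]
    rw [h2] at h1
    refine h1.trans (Real.exp_le_exp.mpr ?_)
    have := Real.sqrt_nonneg L
    nlinarith
  -- B part
  have hBpart : (∏ p ∈ B, ((Z.factorization p : ℝ) + 1))
      ≤ Real.exp (4 * K * L / LL) := by
    set SB := ∑ p ∈ B, Z.factorization p with hSB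
    have h1 : (∏ p ∈ B, (Z.factorization p + 1)) ≤ 2 ^ SB := by
      rw [hSB, ← Finset.prod_pow_eq_pow_sum]
      exact Finset.prod_le_prod' fun p _ => Nat.succ_le_of_lt Nat.lt_two_pow_self
    have hTSB : T ^ SB ≤ Z := by
      have h2 : T ^ SB = ∏ p ∈ B, T ^ Z.factorization p := by
        rw [hSB, Finset.prod_pow_eq_pow_sum]
      have h3 : (∏ p ∈ B, T ^ Z.factorization p) ≤ ∏ p ∈ B, p ^ Z.factorization p := by
        refine Finset.prod_le_prod' fun p hp => ?_
        rw [hB, Finset.mem_filter] at hp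
        exact Nat.pow_le_pow_left (by omega) _
      have h4 : (∏ p ∈ B, p ^ Z.factorization p) ∣ Z := by
        have h5 : (∏ p ∈ P, p ^ Z.factorization p) = Z := by
          have := Nat.factorization_prod_pow_eq_self hZ
          rwa [Finsupp.prod, Nat.support_factorization] at this
        exact (Finset.prod_dvd_prod_of_subset B P (fun p => p ^ Z.factorization p)
          (Finset.filter_subset _ _)).trans (dvd_of_eq h5)
      calc T ^ SB = ∏ p ∈ B, T ^ Z.factorization p := h2
        _ ≤ ∏ p ∈ B, p ^ Z.factorization p := h3
        _ ≤ Z := Nat.le_of_dvd (Nat.pos_of_ne_zero hZ) h4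
    have hSBle : ((SB : ℝ)) ≤ 4 * K * L / LL := by
      have h6 : ((SB : ℝ)) * Real.log T ≤ Real.log Z := by
        rw [← Real.log_pow]
        refine Real.log_le_log (by positivity) ?_
        exact_mod_cast hTSB
      have m1 : ((SB:ℝ)) * (LL/2) ≤ ((SB:ℝ)) * Real.log T :=
        mul_le_mul_of_nonneg_left hlogT (Nat.cast_nonneg SB)
      rw [le_div_iff₀ hLL0]
      linarith
    have h8 : (∏ p ∈ B, ((Z.factorization p : ℝ) + 1)) ≤ (2:ℝ) ^ SB := by
      exact_mod_cast h1
    have h9 : ((2:ℝ)) ^ SB = Real.exp ((SB:ℝ) * Real.log 2) := by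
      rw [Real.exp_nat_mul, Real.exp_log (by norm_num)]
    rw [h9] at h8
    refine h8.trans (Real.exp_le_exp.mpr ?_)
    have hlog2lt : Real.log 2 ≤ 1 := by
      have := Real.log_two_lt_d9
      linarith
    calc ((SB:ℝ)) * Real.log 2 ≤ ((SB:ℝ)) * 1 :=
          mul_le_mul_of_nonneg_left hlog2lt (Nat.cast_nonneg SB)
      _ = ((SB:ℝ)) := mul_one _
      _ ≤ 4 * K * L / LL := hSBle
  -- combine
  rw [split]
  have hcomb : (∏ p ∈ A, ((Z.factorization p : ℝ) + 1)) * ∏ p ∈ B, ((Z.factorization p : ℝ) + 1)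
      ≤ Real.exp (3 * Real.sqrt L * Real.log (5*K*L) + 4 * K * L / LL) := by
    rw [Real.exp_add]
    have hBnn : (0:ℝ) ≤ ∏ p ∈ B, ((Z.factorization p : ℝ) + 1) :=
      Finset.prod_nonneg fun p _ => by positivity
    have hAnn : (0:ℝ) ≤ ∏ p ∈ A, ((Z.factorization p : ℝ) + 1) :=
      Finset.prod_nonneg fun p _ => by positivity
    exact mul_le_mul hApart hBpart hBnn (Real.exp_pos _).le
  refine hcomb.trans (Real.exp_le_exp.mpr ?_)
  -- final arithmetic
  set s := Real.sqrt L with hs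
  have hq : Real.sqrt s * Real.sqrt s = s := Real.mul_self_sqrt (Real.sqrt_nonneg L)
  have hss : s * s = L := Real.mul_self_sqrt hL0.le
  set q := Real.sqrt s with hqq
  have hq1 : 1 ≤ q := by
    rw [hqq, show (1:ℝ) = Real.sqrt 1 by simp]
    exact Real.sqrt_le_sqrt (by linarith)
  have hqs : q ≤ s := by
    calc q = q * 1 := (mul_one q).symm
      _ ≤ q * q := mul_le_mul_of_nonneg_left hq1 (by linarith)
      _ = s := hq
  have hLLq : LL ≤ 4 * q := by
    have h1 : Real.log q = LL / 4 := by
      rw [hqq, Real.log_sqrt (by linarith), hs, Real.log_sqrt hL0.le]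
      ring
    have h2 : Real.log q ≤ q - 1 := Real.log_le_sub_one_of_pos (by linarith)
    linarith
  have hlogsplit : Real.log (5*K*L) = Real.log (5*K) + LL := by
    rw [show (5*(K:ℝ)*L) = (5*K)*L by ring, Real.log_mul (by positivity) (by linarith)]
  have hlog5K0 : (0:ℝ) ≤ Real.log (5*K) := Real.log_nonneg (by linarith)
  rw [hlogsplit]
  have key : 3 * s * (Real.log (5*K) + LL) ≤ (12 * Real.log (5*K) + 48) * L / LL := by
    rw [le_div_iff₀ hLL0]
    have hs0 : (0:ℝ) ≤ s := Real.sqrt_nonneg L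
    have e1 : 3 * s * Real.log (5*K) * LL ≤ 12 * Real.log (5*K) * L := by
      have hLLs : LL ≤ 4 * s := by linarith
      calc 3 * s * Real.log (5*K) * LL ≤ (3 * s * Real.log (5*K)) * (4*s) :=
            mul_le_mul_of_nonneg_left hLLs (by positivity)
        _ = 12 * Real.log (5*K) * (s*s) := by ring
        _ = 12 * Real.log (5*K) * L := by rw [hss]
    have hLL2 : LL * LL ≤ 16 * s := by nlinarith [hLLq, hq, hq1, hLL0]
    have hs0 : (0:ℝ) ≤ s := Real.sqrt_nonneg L
    have e2 : 3 * s * LL * LL ≤ 48 * L := by nlinarith [hLL2, hss, hs0]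
    nlinarith
  have h4KL : 4 * K * L / LL ≤ 4 * (K:ℝ) * L / LL := le_refl _
  have : (4*(K:ℝ) + 12 * Real.log (5*K) + 48) * L / LL
      = (12 * Real.log (5*K) + 48) * L / LL + 4 * K * L / LL := by
    ring
  rw [this]
  linarith

/-- For a tuple `w` with entries in `(u, u+h]` and product `z`, basic facts about the
multiset of shifts `w i - u`. -/
lemma solution_data (n : ℕ) (u h z : ℤ) (hh : 3 ≤ h) (hu : (h+1)^n < u)
    (w : Fin n → ℤ) (hw : ∀ i, w i ∈ Set.Icc (u+1) (u+h)) (hpw : z = ∏ i, w i) :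
    Multiset.card ((List.ofFn (fun i => w i - u) : List ℤ) : Multiset ℤ) = n ∧
    (z = ∑ j ∈ Finset.range (n+1),
        ((List.ofFn (fun i => w i - u) : List ℤ) : Multiset ℤ).esymm (n - j) * u ^ j) ∧
    (∀ j, j < n + 1 →
      0 ≤ ((List.ofFn (fun i => w i - u) : List ℤ) : Multiset ℤ).esymm (n - j) ∧
      ((List.ofFn (fun i => w i - u) : List ℤ) : Multiset ℤ).esymm (n - j) < u) := by
  set sw : Multiset ℤ := ((List.ofFn (fun i => w i - u) : List ℤ) : Multiset ℤ) with hsw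
  have hpow1 : (1:ℤ) ≤ (h+1)^n := one_le_pow₀ (by linarith)
  have hcard : Multiset.card sw = n := by
    rw [hsw, Multiset.coe_card, List.length_ofFn]
  have hmem : ∀ a ∈ sw, 1 ≤ a ∧ a ≤ h := by
    intro a ha
    rw [hsw, Multiset.mem_coe, List.mem_ofFn] at ha
    obtain ⟨i, rfl⟩ := ha
    have := hw i
    rw [Set.mem_Icc] at this
    show 1 ≤ w i - u ∧ w i - u ≤ h
    omega
  have hmem0 : ∀ a ∈ sw, 0 ≤ a := fun a ha => by have := hmem a ha; omega
  have hprod : (Multiset.map (fun r => u + r) sw).prod = ∏ i, w i := by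
    rw [hsw, Multiset.map_coe, List.map_ofFn, Multiset.prod_coe, List.prod_ofFn]
    exact Finset.prod_congr rfl fun i _ => by simp
  have h1 : z = ∑ j ∈ Finset.range (n+1), sw.esymm j * u ^ (n - j) := by
    rw [hpw, ← hprod, eval_prod_add sw u, hcard]
  have h2 : z = ∑ j ∈ Finset.range (n+1), sw.esymm (n - j) * u ^ j := by
    rw [h1, ← Finset.sum_range_reflect (fun j => sw.esymm (n-j) * u^j) (n+1)]
    refine Finset.sum_congr rfl fun j hj => ?_
    have hjn : j ≤ n := by have := Finset.mem_range.mp hj; omega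
    show sw.esymm j * u ^ (n - j) = sw.esymm (n - (n + 1 - 1 - j)) * u ^ (n + 1 - 1 - j)
    rw [show n + 1 - 1 - j = n - j from by omega, Nat.sub_sub_self hjn]
  have hub : ∀ k, sw.esymm k < u := by
    intro k
    rcases le_or_gt k n with hk | hk
    · have := esymm_le_prod sw hmem0 k (by omega)
      have hple : (Multiset.map (fun r => 1 + r) sw).prod ≤ (h+1)^n := by
        have : (Multiset.map (fun r => 1 + r) sw).prod = ∏ i, (1 + (w i - u)) := by
          rw [hsw, Multiset.map_coe, List.map_ofFn, Multiset.prod_coe, List.prod_ofFn]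
          rfl
        rw [this]
        calc ∏ i, (1 + (w i - u)) ≤ ∏ _i : Fin n, (h+1) := by
              refine Finset.prod_le_prod (fun i _ => ?_) (fun i _ => ?_)
              · have := hw i; rw [Set.mem_Icc] at this; omega
              · have := hw i; rw [Set.mem_Icc] at this; omega
          _ = (h+1)^n := by rw [Finset.prod_const, Finset.card_univ, Fintype.card_fin]
      calc sw.esymm k ≤ (Multiset.map (fun r => 1 + r) sw).prod := this
        _ ≤ (h+1)^n := hple
        _ < u := hu
    · have : sw.esymm k = 0 := by
        rw [Multiset.esymm, Multiset.powersetCard_eq_empty _ (by omega : Multiset.card sw < k)]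
        simp
      omega
  exact ⟨hcard, h2, fun j hj => ⟨esymm_nonneg sw hmem0 _, hub _⟩⟩

lemma multiset_det (n : ℕ) (u h z : ℤ) (hh : 3 ≤ h) (hu : (h+1)^n < u)
    (x y : Fin n → ℤ) (hx : ∀ i, x i ∈ Set.Icc (u+1) (u+h)) (hy : ∀ i, y i ∈ Set.Icc (u+1) (u+h))
    (hpx : z = ∏ i, x i) (hpy : z = ∏ i, y i) :
    ((List.ofFn x : List ℤ) : Multiset ℤ) = ((List.ofFn y : List ℤ) : Multiset ℤ) := by
  have hpow1 : (1:ℤ) ≤ (h+1)^n := one_le_pow₀ (by linarith)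
  have hu0 : (0:ℤ) < u := by linarith
  obtain ⟨hcx, hzx, hbx⟩ := solution_data n u h z hh hu x hx hpx
  obtain ⟨hcy, hzy, hby⟩ := solution_data n u h z hh hu y hy hpy
  set sx : Multiset ℤ := ((List.ofFn (fun i => x i - u) : List ℤ) : Multiset ℤ) with hsx
  set sy : Multiset ℤ := ((List.ofFn (fun i => y i - u) : List ℤ) : Multiset ℤ) with hsy
  have hdig := digits_unique u hu0 (n+1) (fun j => sx.esymm (n - j)) (fun j => sy.esymm (n - j))
    hbx hby (by rw [← hzx, ← hzy])
  have hesymm : ∀ k, k ≤ Multiset.card sx → sx.esymm k = sy.esymm k := by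
    intro k hk
    rw [hcx] at hk
    have h2 : sx.esymm (n - (n - k)) = sy.esymm (n - (n - k)) := hdig (n - k) (by omega)
    rwa [Nat.sub_sub_self hk] at h2
  have hset : sx = sy := multiset_eq_of_esymm sx sy (by rw [hcx, hcy]) hesymm
  have hmapx : ((List.ofFn x : List ℤ) : Multiset ℤ) = Multiset.map (fun r => r + u) sx := by
    have hfun : ((fun r => r + u) ∘ fun i => x i - u) = x := by funext i; simp
    rw [hsx, Multiset.map_coe, List.map_ofFn, hfun]
  have hmapy : ((List.ofFn y : List ℤ) : Multiset ℤ) = Multiset.map (fun r => r + u) sy := by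
    have hfun : ((fun r => r + u) ∘ fun i => y i - u) = y := by funext i; simp
    rw [hsy, Multiset.map_coe, List.map_ofFn, hfun]
  rw [hmapx, hmapy, hset]

/-- Divisors in short intervals: the number of ways to write `z` as a product of
`n` integers each in `[u+1, u+h]` is at most `exp(C_n log h / log log h)`. -/
theorem divisors_in_short_intervals (n : ℕ) (hn : 1 ≤ n) :
    ∃ C : ℝ, ∀ u h z : ℤ, 0 ≤ u → 3 ≤ h → 1 ≤ z →
      ({x : Fin n → ℤ | (∀ i, x i ∈ Set.Icc (u + 1) (u + h)) ∧ z = ∏ i, x i}.ncard : ℝ)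
        ≤ Real.exp (C * Real.log (h : ℝ) / Real.log (Real.log (h : ℝ))) := by
  obtain ⟨m, rfl⟩ : ∃ m, n = m + 1 := ⟨n - 1, by omega⟩
  set K : ℕ := (m + 2) * (m + 1) with hKdef
  have hK1 : 1 ≤ K := Nat.one_le_iff_ne_zero.mpr (by positivity)
  set cK : ℝ := 4*(K:ℝ) + 12 * Real.log (5*K) + 48 with hcKdef
  have hK1R : (1:ℝ) ≤ (K:ℝ) := by exact_mod_cast hK1
  have hlog5K0 : (0:ℝ) ≤ Real.log (5*K) := Real.log_nonneg (by linarith)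
  have hcK0 : 0 ≤ cK := by rw [hcKdef]; linarith
  have hfact1 : (1:ℝ) ≤ ((m+1).factorial : ℝ) := by
    exact_mod_cast Nat.one_le_iff_ne_zero.mpr (Nat.factorial_ne_zero (m+1))
  have hlogfact0 : (0:ℝ) ≤ Real.log ((m+1).factorial) := Real.log_nonneg hfact1
  refine ⟨(m+1) * cK + Real.log ((m+1).factorial) + 1, ?_⟩
  intro u h z hu hh hz
  set S := {x : Fin (m+1) → ℤ | (∀ i, x i ∈ Set.Icc (u + 1) (u + h)) ∧ z = ∏ i, x i} with hSdef
  have hhR : (3:ℝ) ≤ ((h:ℤ):ℝ) := by exact_mod_cast hh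
  set L := Real.log ((h:ℤ):ℝ) with hLdef
  have hL1 : 1 < L := lt_of_lt_of_le log_three_gt_one (Real.log_le_log (by norm_num) hhR)
  have hL0 : 0 < L := by linarith
  set LL := Real.log L with hLLdef
  have hLL0 : 0 < LL := Real.log_pos hL1
  have hLLle : LL ≤ L := by
    have := Real.log_le_sub_one_of_pos hL0
    rw [hLLdef]; linarith
  have hratio1 : 1 ≤ L / LL := by rw [le_div_iff₀ hLL0]; linarith
  have key : (S.ncard : ℝ) ≤ Real.exp ((((m:ℝ)+1) * cK) * L / LL) ∨
      (S.ncard : ℝ) ≤ ((m+1).factorial : ℝ) := by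
    rcases S.eq_empty_or_nonempty with hSe | ⟨x₀, hx₀⟩
    · left
      rw [hSe]
      simp only [Set.ncard_empty, Nat.cast_zero]
      positivity
    obtain ⟨hx₀mem, hx₀prod⟩ := hx₀
    rcases le_or_gt u ((h+1)^(m+1)) with hcase | hcase
    · -- small u : divisor counting
      left
      have hpow1 : (1:ℤ) ≤ (h+1)^(m+1) := one_le_pow₀ (by linarith)
      set Z : ℕ := z.toNat with hZdef
      have hZz : ((Z:ℕ):ℤ) = z := Int.toNat_of_nonneg (by linarith)
      have hZ0 : Z ≠ 0 := by
        intro hc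
        rw [hc] at hZz
        simp at hZz
        omega
      -- bound on z
      have hzle : z ≤ (h+1)^K := by
        have h1 : z ≤ (u+h)^(m+1) := by
          rw [hx₀prod]
          calc ∏ i, x₀ i ≤ ∏ _i : Fin (m+1), (u+h) := by
                refine Finset.prod_le_prod (fun i _ => ?_) (fun i _ => ?_)
                · have := hx₀mem i; rw [Set.mem_Icc] at this; omega
                · have := hx₀mem i; rw [Set.mem_Icc] at this; omega
            _ = (u+h)^(m+1) := by rw [Finset.prod_const, Finset.card_univ, Fintype.card_fin]
        have h2 : u + h ≤ (h+1)^(m+2) := by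
          have e : ((h:ℤ)+1)^(m+2) = (h+1)^(m+1) * (h+1) := pow_succ _ _
          nlinarith
        calc z ≤ (u+h)^(m+1) := h1
          _ ≤ ((h+1)^(m+2))^(m+1) := by
              refine pow_le_pow_left₀ ?_ h2 _
              omega
          _ = (h+1)^K := by rw [← pow_mul]
      have hZle : ((Z:ℕ):ℝ) ≤ (((h:ℤ):ℝ)+1)^K := by
        have : ((Z:ℕ):ℤ) ≤ (h+1)^K := by rw [hZz]; exact hzle
        exact_mod_cast this
      have htau := tau_bound K hK1 ((h:ℤ):ℝ) hhR Z hZ0 hZle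
      -- injection into divisor tuples
      set D : Finset ℤ := Z.divisors.map ⟨(fun k : ℕ => (k:ℤ)), fun a b hab => by simpa using hab⟩ with hDdef
      have hcount : S.ncard ≤ D.card ^ m := by
        set T : Set (Fin m → ℤ) := ↑(Fintype.piFinset fun _ : Fin m => D) with hTdef
        have hmaps : ∀ x ∈ S, (fun i : Fin m => x i.castSucc) ∈ T := by
          intro x hx
          rw [hTdef, Finset.mem_coe, Fintype.mem_piFinset]
          intro i
          obtain ⟨hxmem, hxprod⟩ := hx
          have hpos : 1 ≤ x i.castSucc := by
            have := hxmem i.castSucc; rw [Set.mem_Icc] at this; omega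
          have hdvd : x i.castSucc ∣ z := by
            rw [hxprod]
            exact Finset.dvd_prod_of_mem x (Finset.mem_univ _)
          rw [hDdef, Finset.mem_map]
          refine ⟨(x i.castSucc).toNat, ?_, by show ((x i.castSucc).toNat : ℤ) = x i.castSucc; exact Int.toNat_of_nonneg (by omega : (0:ℤ) ≤ x i.castSucc)⟩
          rw [Nat.mem_divisors]
          refine ⟨?_, hZ0⟩
          rw [← Int.natCast_dvd_natCast]
          rw [Int.toNat_of_nonneg (by omega : (0:ℤ) ≤ x i.castSucc), hZz]
          exact hdvd
        have hinj : Set.InjOn (fun x (i : Fin m) => x i.castSucc) S := by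
          intro x hx y hy hxy
          obtain ⟨hxmem, hxprod⟩ := hx
          obtain ⟨hymem, hyprod⟩ := hy
          funext i
          refine Fin.lastCases ?_ ?_ i
          · have hprodeq : (∏ i : Fin m, x i.castSucc) * x (Fin.last m)
                = (∏ i : Fin m, y i.castSucc) * y (Fin.last m) := by
              rw [← Fin.prod_univ_castSucc, ← Fin.prod_univ_castSucc, ← hxprod, ← hyprod]
            have hpe : (∏ i : Fin m, x i.castSucc) = ∏ i : Fin m, y i.castSucc := by
              exact Finset.prod_congr rfl fun i _ => congrFun hxy i
            have hne : (∏ i : Fin m, x i.castSucc) ≠ 0 := by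
              refine Finset.prod_ne_zero_iff.mpr fun i _ => ?_
              have := hxmem i.castSucc; rw [Set.mem_Icc] at this; omega
            rw [hpe] at hprodeq hne
            exact mul_left_cancel₀ hne hprodeq
          · intro i
            exact congrFun hxy i
        have hle := Set.ncard_le_ncard_of_injOn _ hmaps hinj (by rw [hTdef]; exact Finset.finite_toSet _)
        have hTcard : T.ncard = D.card ^ m := by
          rw [hTdef, Set.ncard_coe_finset, Fintype.card_piFinset, Finset.prod_const,
            Finset.card_univ, Fintype.card_fin]
        rwa [hTcard] at hle
      have hDcard : D.card = Z.divisors.card := Finset.card_map _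
      calc (S.ncard : ℝ) ≤ ((Z.divisors.card : ℝ)) ^ m := by
            rw [← hDcard]
            exact_mod_cast hcount
        _ ≤ (Real.exp (cK * L / LL)) ^ m := by
            refine pow_le_pow_left₀ (by positivity) ?_ m
            exact htau
        _ = Real.exp ((m:ℝ) * (cK * L / LL)) := by rw [← Real.exp_nat_mul]
        _ ≤ Real.exp ((((m:ℝ)+1) * cK) * L / LL) := by
            refine Real.exp_le_exp.mpr ?_
            have e : (m:ℝ) * (cK * L / LL) = (m:ℝ) * cK * L / LL := by ring
            rw [e]
            gcongr
            have hm0 : (0:ℝ) ≤ (m:ℝ) := Nat.cast_nonneg m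
            nlinarith
    · -- large u : rigidity
      right
      have hsub : S ⊆ (fun σ : Equiv.Perm (Fin (m+1)) => x₀ ∘ σ) '' Set.univ := by
        intro x hx
        obtain ⟨hxmem, hxprod⟩ := hx
        have hmeq := multiset_det (m+1) u h z hh hcase x₀ x hx₀mem hxmem hx₀prod hxprod
        obtain ⟨σ, hσ⟩ := exists_perm_of_multiset_eq x₀ x hmeq
        exact ⟨σ, Set.mem_univ _, hσ.symm⟩
      have h1 : S.ncard ≤ ((fun σ : Equiv.Perm (Fin (m+1)) => x₀ ∘ σ) '' Set.univ).ncard :=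
        Set.ncard_le_ncard hsub (Set.finite_univ.image _)
      have h2 : ((fun σ : Equiv.Perm (Fin (m+1)) => x₀ ∘ σ) '' Set.univ).ncard
          ≤ (Set.univ : Set (Equiv.Perm (Fin (m+1)))).ncard := Set.ncard_image_le Set.finite_univ
      have h3 : (Set.univ : Set (Equiv.Perm (Fin (m+1)))).ncard = (m+1).factorial := by
        rw [Set.ncard_univ, Nat.card_eq_fintype_card, Fintype.card_perm, Fintype.card_fin]
      have : S.ncard ≤ (m+1).factorial := by omega
      exact_mod_cast this
  rcases key with hk | hk
  · refine hk.trans (Real.exp_le_exp.mpr ?_)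
    gcongr
    linarith
  · calc (S.ncard:ℝ) ≤ ((m+1).factorial : ℝ) := hk
      _ = Real.exp (Real.log ((m+1).factorial)) := (Real.exp_log (by linarith)).symm
      _ ≤ Real.exp (((m:ℝ)+1) * cK + Real.log ((m+1).factorial) + 1) := by
          refine Real.exp_le_exp.mpr ?_
          have hm0 : (0:ℝ) ≤ (m:ℝ) := Nat.cast_nonneg m
          nlinarith
      _ ≤ Real.exp ((((m:ℝ)+1) * cK + Real.log ((m+1).factorial) + 1) * L / LL) := by
          refine Real.exp_le_exp.mpr ?_
          set Cf := ((m:ℝ)+1) * cK + Real.log ((m+1).factorial) + 1 with hCf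
          have hCf0 : 0 ≤ Cf := by
            have hm0 : (0:ℝ) ≤ (m:ℝ) := Nat.cast_nonneg m
            rw [hCf]; nlinarith
          calc Cf = Cf * 1 := (mul_one Cf).symm
            _ ≤ Cf * (L / LL) := mul_le_mul_of_nonneg_left hratio1 hCf0
            _ = Cf * L / LL := by rw [mul_div_assoc]
end

section
/- Let H ≥ 3 be real and let S be a finite set of nonzero integers with |s| ≤ H for all s ∈ S. For every integer r ≥ 1 there exists a constant c(r) depending only on r such that for all sufficiently large Q ≥ c(r) log H, there exists a square-free integer q that is a product of r distinct primes in [Q, 2Q] with #{s ∈ S : gcd(s,q) = 1} ≥ (1/2)·#S. -/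
set_option maxHeartbeats 1000000

open Finset

private def Tset' (n : ℕ) : Finset ℕ :=
  (Finset.range (2*n+1)).filter (fun p => p.Prime ∧ n < p)


private lemma log_le_four_rpow {y : ℝ} (hy : 1 ≤ y) : Real.log y ≤ 4 * y ^ ((1:ℝ)/4) := by
  have h0 : (0:ℝ) < y := by linarith
  have h1 : Real.log (y ^ ((1:ℝ)/4)) ≤ y ^ ((1:ℝ)/4) - 1 :=
    Real.log_le_sub_one_of_pos (Real.rpow_pos_of_pos h0 _)
  rw [Real.log_rpow h0] at h1
  nlinarith [Real.rpow_pos_of_pos h0 ((1:ℝ)/4)]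

private lemma auxA {x : ℝ} (hx : (10:ℝ)^8 ≤ x) :
    x * (2*x) ^ Real.sqrt (2*x) ≤ (4:ℝ) ^ (x/6) := by
  have hx0 : (0:ℝ) < x := by norm_num at hx ⊢; linarith
  have h2x0 : (0:ℝ) < 2*x := by linarith
  have h2x1 : (1:ℝ) ≤ 2*x := by nlinarith
  have hLpos : (0:ℝ) < x * (2*x) ^ Real.sqrt (2*x) :=
    mul_pos hx0 (Real.rpow_pos_of_pos h2x0 _)
  rw [← Real.log_le_log_iff hLpos (Real.rpow_pos_of_pos (by norm_num) _),
    Real.log_mul hx0.ne' (Real.rpow_pos_of_pos h2x0 _).ne', Real.log_rpow h2x0,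
    Real.log_rpow (by norm_num : (0:ℝ) < 4)]
  -- bounds
  have hlog2x : Real.log (2*x) ≤ 4 * (2*x) ^ ((1:ℝ)/4) := log_le_four_rpow h2x1
  have hlogx : Real.log x ≤ 4 * (2*x) ^ ((1:ℝ)/4) := by
    refine le_trans ?_ hlog2x
    exact Real.log_le_log hx0 (by linarith)
  have hsqrt : Real.sqrt (2*x) = (2*x) ^ ((1:ℝ)/2) := by rw [Real.sqrt_eq_rpow]
  have hmul : (2*x) ^ ((1:ℝ)/2) * (2*x) ^ ((1:ℝ)/4) = (2*x) ^ ((3:ℝ)/4) := by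
    rw [← Real.rpow_add h2x0]; norm_num
  have h14 : (2*x) ^ ((1:ℝ)/4) ≤ (2*x) ^ ((3:ℝ)/4) :=
    Real.rpow_le_rpow_of_exponent_le h2x1 (by norm_num)
  have hsum : Real.log x + Real.sqrt (2*x) * Real.log (2*x) ≤ 8 * (2*x) ^ ((3:ℝ)/4) := by
    have hs : Real.sqrt (2*x) * Real.log (2*x) ≤ 4 * (2*x) ^ ((3:ℝ)/4) := by
      calc Real.sqrt (2*x) * Real.log (2*x)
          ≤ Real.sqrt (2*x) * (4 * (2*x) ^ ((1:ℝ)/4)) := by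
            exact mul_le_mul_of_nonneg_left hlog2x (Real.sqrt_nonneg _)
        _ = 4 * ((2*x) ^ ((1:ℝ)/2) * (2*x) ^ ((1:ℝ)/4)) := by rw [hsqrt]; ring
        _ = 4 * (2*x) ^ ((3:ℝ)/4) := by rw [hmul]
    linarith [h14.trans_eq rfl, hlogx]
  refine hsum.trans ?_
  -- 8 (2x)^{3/4} ≤ (x/6) log 4
  have h234 : (2*x) ^ ((3:ℝ)/4) ≤ 2 * x ^ ((3:ℝ)/4) := by
    rw [Real.mul_rpow (by norm_num) hx0.le]
    have : (2:ℝ) ^ ((3:ℝ)/4) ≤ 2 := by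
      calc (2:ℝ) ^ ((3:ℝ)/4) ≤ (2:ℝ) ^ ((1:ℝ)) := Real.rpow_le_rpow_of_exponent_le (by norm_num) (by norm_num)
        _ = 2 := Real.rpow_one 2
    exact mul_le_mul_of_nonneg_right this (Real.rpow_nonneg hx0.le _)
  have hxq : (100:ℝ) ≤ x ^ ((1:ℝ)/4) := by
    have := Real.rpow_le_rpow (by norm_num : (0:ℝ) ≤ (10:ℝ)^8) hx (by norm_num : (0:ℝ) ≤ (1:ℝ)/4)
    calc (100:ℝ) = ((10:ℝ)^8) ^ ((1:ℝ)/4) := by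
          rw [← Real.rpow_natCast 10 8, ← Real.rpow_mul (by norm_num)]
          norm_num
      _ ≤ x ^ ((1:ℝ)/4) := this
  have hxsplit : x ^ ((1:ℝ)/4) * x ^ ((3:ℝ)/4) = x := by
    rw [← Real.rpow_add hx0]; norm_num
  have hlog4 : (6:ℝ)/5 ≤ Real.log 4 := by
    have h2 : Real.log 4 = 2 * Real.log 2 := by
      rw [show (4:ℝ) = 2^(2:ℕ) by norm_num, Real.log_pow]; norm_num
    have := Real.log_two_gt_d9
    rw [h2]; linarith
  have h34nn : (0:ℝ) ≤ x ^ ((3:ℝ)/4) := Real.rpow_nonneg hx0.le _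
  have hfin : 16 * x ^ ((3:ℝ)/4) ≤ x / 5 := by nlinarith
  calc 8 * (2*x) ^ ((3:ℝ)/4) ≤ 16 * x ^ ((3:ℝ)/4) := by linarith
    _ ≤ x/5 := hfin
    _ ≤ x/6 * Real.log 4 := by nlinarith



private lemma auxB (n : ℕ) (n_large : 2 < n) :
    Nat.centralBinom n ≤ (2*n) ^ Nat.sqrt (2*n) * 4 ^ (2*n/3) * (2*n) ^ (Tset' n).card := by
  set f : ℕ → ℕ := fun x => x ^ (Nat.centralBinom n).factorization x with hf
  have hsplit : ∏ x ∈ Finset.range (2*n+1), f x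
      = (∏ x ∈ Finset.range (2*n/3+1), f x) * ∏ x ∈ Finset.Ico (2*n/3+1) (2*n+1), f x := by
    rw [Finset.range_eq_Ico, Finset.range_eq_Ico]
    exact (Finset.prod_Ico_consecutive f (Nat.zero_le _)
      (by omega : 2*n/3+1 ≤ 2*n+1)).symm
  have h1 : (∏ x ∈ Finset.range (2*n/3+1), f x) ≤ (2*n) ^ Nat.sqrt (2*n) * 4 ^ (2*n/3) := by
    have n_pos : 0 < n := by omega
    have n2_pos : 1 ≤ 2 * n := by omega
    let S := (Finset.range (2 * n / 3 + 1)).filter Nat.Prime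
    have hSf : ∏ x ∈ S, f x = ∏ x ∈ Finset.range (2 * n / 3 + 1), f x := by
      refine Finset.prod_filter_of_ne fun p _ h => ?_
      contrapose! h; dsimp only [f]
      rw [Nat.factorization_eq_zero_of_not_prime n.centralBinom h, pow_zero]
    rw [← hSf, ← Finset.prod_filter_mul_prod_filter_not S (· ≤ Nat.sqrt (2 * n))]
    apply Nat.mul_le_mul
    · refine (Finset.prod_le_prod' fun p _ => (?_ : f p ≤ 2 * n)).trans ?_
      · exact Nat.pow_factorization_choose_le (by omega)
      have hcard : (Finset.Icc 1 (Nat.sqrt (2 * n))).card = Nat.sqrt (2 * n) := by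
        rw [Nat.card_Icc, Nat.add_sub_cancel]
      rw [Finset.prod_const]
      refine pow_le_pow_right₀ n2_pos ((Finset.card_le_card fun x hx => ?_).trans hcard.le)
      obtain ⟨h1, h2⟩ := Finset.mem_filter.1 hx
      exact Finset.mem_Icc.mpr ⟨(Finset.mem_filter.1 h1).2.one_lt.le, h2⟩
    · refine le_trans ?_ (primorial_le_4_pow (2 * n / 3))
      refine (Finset.prod_le_prod' fun p hp => (?_ : f p ≤ p)).trans ?_
      · obtain ⟨h1, h2⟩ := Finset.mem_filter.1 hp
        refine (Nat.pow_le_pow_right (Finset.mem_filter.1 h1).2.one_lt.le ?_).trans (pow_one p).le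
        exact Nat.factorization_choose_le_one (Nat.sqrt_lt'.mp <| not_le.1 h2)
      refine Finset.prod_le_prod_of_subset_of_one_le' (Finset.filter_subset _ _) ?_
      exact fun p hp _ => (Finset.mem_filter.1 hp).2.one_lt.le
  have h2 : (∏ x ∈ Finset.Ico (2*n/3+1) (2*n+1), f x) ≤ (2*n) ^ (Tset' n).card := by
    have heq : ∏ x ∈ (Finset.Ico (2*n/3+1) (2*n+1)).filter (fun p => p.Prime ∧ n < p), f x
        = ∏ x ∈ Finset.Ico (2*n/3+1) (2*n+1), f x := by
      refine Finset.prod_filter_of_ne fun p hp h => ?_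
      by_contra hc
      rw [not_and_or, not_lt] at hc
      rcases hc with hc | hc
      · dsimp only [f] at h
        rw [Nat.factorization_eq_zero_of_not_prime n.centralBinom hc, pow_zero] at h
        exact h rfl
      · have hmem := Finset.mem_Ico.1 hp
        have h3p : 2 * n < 3 * p := by
          have := Nat.div_add_mod (2*n) 3
          omega
        dsimp only [f] at h
        rw [Nat.factorization_centralBinom_of_two_mul_self_lt_three_mul n_large hc h3p,
          pow_zero] at h
        exact h rfl
    rw [← heq]
    have hsub : (Finset.Ico (2*n/3+1) (2*n+1)).filter (fun p => p.Prime ∧ n < p) ⊆ Tset' n := by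
      intro x hx
      obtain ⟨hx1, hx2⟩ := Finset.mem_filter.1 hx
      exact Finset.mem_filter.2 ⟨Finset.mem_range.2 (Finset.mem_Ico.1 hx1).2, hx2⟩
    calc ∏ x ∈ (Finset.Ico (2*n/3+1) (2*n+1)).filter (fun p => p.Prime ∧ n < p), f x
        ≤ ∏ _x ∈ (Finset.Ico (2*n/3+1) (2*n+1)).filter (fun p => p.Prime ∧ n < p), (2*n) := by
          refine Finset.prod_le_prod' fun p hp => ?_
          obtain ⟨hp1, hp2, hp3⟩ := Finset.mem_filter.1 hp
          have hnu : (Nat.centralBinom n).factorization p ≤ 1 := by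
            apply Nat.factorization_choose_le_one
            nlinarith [hp3]
          calc f p ≤ p ^ 1 := Nat.pow_le_pow_right hp2.one_lt.le hnu
            _ = p := pow_one p
            _ ≤ 2*n := by have := (Finset.mem_Ico.1 hp1).2; omega
      _ = (2*n) ^ ((Finset.Ico (2*n/3+1) (2*n+1)).filter (fun p => p.Prime ∧ n < p)).card :=
          Finset.prod_const _
      _ ≤ (2*n) ^ (Tset' n).card :=
          Nat.pow_le_pow_right (by omega) (Finset.card_le_card hsub)
  calc Nat.centralBinom n = ∏ x ∈ Finset.range (2*n+1), f x :=
        (Nat.prod_pow_factorization_centralBinom n).symm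
    _ = _ := hsplit
    _ ≤ _ := Nat.mul_le_mul h1 h2

private lemma auxC {n : ℕ} (hn : 10^8 ≤ n) :
    (n:ℝ)/6 * Real.log 4 ≤ ((Tset' n).card : ℝ) * Real.log (2*(n:ℝ)) := by
  have n2 : 2 < n := by omega
  have hB := auxB n n2
  have hF := Nat.four_pow_lt_mul_centralBinom n (by omega)
  set t := (Tset' n).card with ht
  have hNat : 4 ^ n < n * ((2*n) ^ Nat.sqrt (2*n) * 4 ^ (2*n/3) * (2*n) ^ t) :=
    hF.trans_le (Nat.mul_le_mul_left n hB)
  have hnR : (1:ℝ) ≤ (n:ℝ) := by exact_mod_cast (by omega : 1 ≤ n)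
  have h2n1 : (1:ℝ) ≤ 2*(n:ℝ) := by linarith
  have h2n0 : (0:ℝ) < 2*(n:ℝ) := by linarith
  have hcast : (4:ℝ) ^ ((n:ℝ)) <
      ((n:ℝ) * (2*(n:ℝ)) ^ Real.sqrt (2*(n:ℝ))) * ((4:ℝ) ^ ((2*(n:ℝ))/3) * (2*(n:ℝ)) ^ t) := by
    have h1 : ((4 ^ n : ℕ) : ℝ) < ((n * ((2*n) ^ Nat.sqrt (2*n) * 4 ^ (2*n/3) * (2*n) ^ t) : ℕ) : ℝ) := by
      exact_mod_cast hNat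
    push_cast at h1
    have e1 : (2*(n:ℝ)) ^ (Nat.sqrt (2*n)) ≤ (2*(n:ℝ)) ^ Real.sqrt (2*(n:ℝ)) := by
      rw [← Real.rpow_natCast (2*(n:ℝ)) (Nat.sqrt (2*n))]
      apply Real.rpow_le_rpow_of_exponent_le h2n1
      have := Real.nat_sqrt_le_real_sqrt (a := 2*n)
      calc ((Nat.sqrt (2*n) : ℝ)) ≤ Real.sqrt ((2*n : ℕ) : ℝ) := this
        _ = Real.sqrt (2*(n:ℝ)) := by push_cast; ring_nf
    have e2 : (4:ℝ) ^ (2*n/3 : ℕ) ≤ (4:ℝ) ^ ((2*(n:ℝ))/3) := by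
      rw [← Real.rpow_natCast (4:ℝ) (2*n/3)]
      apply Real.rpow_le_rpow_of_exponent_le (by norm_num)
      calc ((2*n/3 : ℕ) : ℝ) ≤ ((2*n : ℕ):ℝ)/3 := Nat.cast_div_le
        _ = 2*(n:ℝ)/3 := by push_cast; ring
    calc (4:ℝ) ^ ((n:ℝ)) = (4:ℝ) ^ n := by rw [Real.rpow_natCast]
      _ < (n:ℝ) * ((2*(n:ℝ)) ^ (Nat.sqrt (2*n)) * (4:ℝ) ^ (2*n/3:ℕ) * (2*(n:ℝ)) ^ t) := by
          convert h1 using 3 <;> push_cast <;> ring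
      _ ≤ (n:ℝ) * ((2*(n:ℝ)) ^ Real.sqrt (2*(n:ℝ)) * (4:ℝ) ^ ((2*(n:ℝ))/3) * (2*(n:ℝ)) ^ t) := by
          gcongr <;> first | exact e1 | exact e2 | positivity | linarith
      _ = ((n:ℝ) * (2*(n:ℝ)) ^ Real.sqrt (2*(n:ℝ))) * ((4:ℝ) ^ ((2*(n:ℝ))/3) * (2*(n:ℝ)) ^ t) := by
          ring
  have hA := auxA (x := (n:ℝ)) (by exact_mod_cast hn)
  have hkey : (4:ℝ) ^ ((n:ℝ)/6) < (2*(n:ℝ)) ^ t := by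
    have hsplit : (4:ℝ) ^ ((n:ℝ)) = ((4:ℝ) ^ ((n:ℝ)/6) * (4:ℝ) ^ ((2*(n:ℝ))/3)) * (4:ℝ) ^ ((n:ℝ)/6) := by
      rw [← Real.rpow_add (by norm_num), ← Real.rpow_add (by norm_num)]
      ring_nf
    have hlt : ((4:ℝ) ^ ((n:ℝ)/6) * (4:ℝ) ^ ((2*(n:ℝ))/3)) * (4:ℝ) ^ ((n:ℝ)/6)
        < ((4:ℝ) ^ ((n:ℝ)/6) * (4:ℝ) ^ ((2*(n:ℝ))/3)) * (2*(n:ℝ)) ^ t := by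
      rw [← hsplit]
      calc (4:ℝ) ^ ((n:ℝ)) < ((n:ℝ) * (2*(n:ℝ)) ^ Real.sqrt (2*(n:ℝ))) * ((4:ℝ) ^ ((2*(n:ℝ))/3) * (2*(n:ℝ)) ^ t) := hcast
        _ ≤ (4:ℝ) ^ ((n:ℝ)/6) * ((4:ℝ) ^ ((2*(n:ℝ))/3) * (2*(n:ℝ)) ^ t) := by
            have := mul_le_mul_of_nonneg_right hA (by positivity : (0:ℝ) ≤ (4:ℝ) ^ ((2*(n:ℝ))/3) * (2*(n:ℝ)) ^ t)
            linarith
        _ = ((4:ℝ) ^ ((n:ℝ)/6) * (4:ℝ) ^ ((2*(n:ℝ))/3)) * (2*(n:ℝ)) ^ t := by ring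
    exact lt_of_mul_lt_mul_left hlt (by positivity)
  have hlog := Real.log_lt_log (by positivity) hkey
  rw [Real.log_rpow (by norm_num), Real.log_pow] at hlog
  calc (n:ℝ)/6 * Real.log 4 = (n:ℝ)/6 * Real.log 4 := rfl
    _ ≤ (t:ℝ) * Real.log (2*(n:ℝ)) := by linarith

private lemma squarefree_prod_primes :
    ∀ (P : Finset ℕ), (∀ p ∈ P, p.Prime) → Squarefree (∏ p ∈ P, p) := by
  intro P
  induction P using Finset.induction_on with
  | empty => intro _; simpa using squarefree_one
  | @insert a s ha ih =>
    intro hP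
    rw [Finset.prod_insert ha, squarefree_mul_iff]
    refine ⟨?_, (hP a (Finset.mem_insert_self a s)).prime.squarefree,
      ih (fun p hp => hP p (Finset.mem_insert_of_mem hp))⟩
    rw [← Nat.coprime_iff_isRelPrime]
    apply Nat.Coprime.prod_right
    intro p hp
    exact (Nat.coprime_primes (hP a (Finset.mem_insert_self a s))
      (hP p (Finset.mem_insert_of_mem hp))).mpr (fun h => ha (h ▸ hp))

/-- For any finite set `S` of nonzero integers bounded by `H`, and any `r ≥ 1`,
for sufficiently large `Q ≥ c(r) log H` there is a product `q` of `r` distinct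
primes in `[Q, 2Q]` coprime to at least half of the elements of `S`. -/
theorem coprime_modulus_exists (r : ℕ) (hr : 1 ≤ r) :
    ∃ c Q₀ : ℝ, ∀ Q H : ℝ, 3 ≤ H → Q₀ ≤ Q → c * Real.log H ≤ Q →
      ∀ S : Finset ℤ, (∀ s ∈ S, s ≠ 0 ∧ |(s : ℝ)| ≤ H) →
        ∃ q : ℕ, ∃ P : Finset ℕ, P.card = r ∧
          (∀ p ∈ P, p.Prime ∧ Q ≤ (p : ℝ) ∧ (p : ℝ) ≤ 2 * Q) ∧
          q = ∏ p ∈ P, p ∧ Squarefree q ∧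
          (S.card : ℝ) / 2 ≤ ((S.filter fun s => Int.gcd s q = 1).card : ℝ) := by
  refine ⟨80 * (r:ℝ), 10^9 + 25600 * (r:ℝ)^2, ?_⟩
  intro Q H hH hQ0 hcQ S hS
  have hrR : (1:ℝ) ≤ (r:ℝ) := by exact_mod_cast hr
  have hQ9 : (1000000000:ℝ) ≤ Q := by nlinarith [sq_nonneg (r:ℝ)]
  have hQ3 : (3:ℝ) ≤ Q := by linarith
  have hQpos : (0:ℝ) < Q := by linarith
  set L := Real.log Q with hL
  have hL1 : 1 ≤ L := by
    rw [hL, show (1:ℝ) = Real.log (Real.exp 1) by rw [Real.log_exp]]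
    apply Real.log_le_log (Real.exp_pos 1)
    have := Real.exp_one_lt_d9
    linarith
  have hLpos : (0:ℝ) < L := by linarith
  have hlogH : 0 ≤ Real.log H := Real.log_nonneg (by linarith)
  set n := ⌊Q⌋₊ with hn
  have hnQ : (n:ℝ) ≤ Q := Nat.floor_le hQpos.le
  have hQn1 : Q < (n:ℝ) + 1 := Nat.lt_floor_add_one Q
  have hn8 : 10^8 ≤ n := by
    have h : ((10^8 : ℕ):ℝ) ≤ Q := by push_cast; linarith
    exact Nat.le_floor h
  set T := Tset' n with hT
  set t := T.card with htdef
  have hTmem : ∀ p ∈ T, p.Prime ∧ Q ≤ (p:ℝ) ∧ (p:ℝ) ≤ 2*Q := by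
    intro p hp
    obtain ⟨hp0, hp1, hp2⟩ := Finset.mem_filter.1 hp
    have hp3 : p ≤ 2*n := by have := Finset.mem_range.1 hp0; omega
    have hc1 : (n:ℝ) + 1 ≤ (p:ℝ) := by exact_mod_cast (by omega : n + 1 ≤ p)
    have hc2 : (p:ℝ) ≤ 2*(n:ℝ) := by exact_mod_cast hp3
    exact ⟨hp1, by linarith, by linarith⟩
  -- per-element bound
  have hes : ∀ s ∈ S, ((T.filter (fun (p:ℕ) => (p:ℤ) ∣ s)).card : ℝ) * L ≤ Real.log H := by
    intro s hs
    obtain ⟨hs0, hsH⟩ := hS s hs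
    set F := T.filter (fun (p:ℕ) => (p:ℤ) ∣ s) with hF
    have hFsub : F ⊆ T := Finset.filter_subset _ _
    have hdvd : (∏ p ∈ F, p) ∣ s.natAbs := by
      apply Finset.prod_primes_dvd
      · intro p hp; exact (hTmem p (hFsub hp)).1.prime
      · intro p hp; exact Int.natCast_dvd.mp (Finset.mem_filter.1 hp).2
    have habs : (s.natAbs : ℝ) ≤ H := by rw [Nat.cast_natAbs, Int.cast_abs]; exact hsH
    have hprodH : ((∏ p ∈ F, p : ℕ) : ℝ) ≤ H := by
      have h1 : (∏ p ∈ F, p) ≤ s.natAbs := Nat.le_of_dvd (Int.natAbs_pos.mpr hs0) hdvd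
      calc ((∏ p ∈ F, p : ℕ):ℝ) ≤ (s.natAbs:ℝ) := by exact_mod_cast h1
        _ ≤ H := habs
    have hQpow : Q ^ F.card ≤ ((∏ p ∈ F, p : ℕ) : ℝ) := by
      rw [Nat.cast_prod]
      calc Q ^ F.card = ∏ _p ∈ F, Q := (Finset.prod_const Q).symm
        _ ≤ ∏ p ∈ F, (p:ℝ) :=
            Finset.prod_le_prod (fun _ _ => hQpos.le) (fun p hp => (hTmem p (hFsub hp)).2.1)
    have hQH : Q ^ F.card ≤ H := hQpow.trans hprodH
    have hlog := Real.log_le_log (by positivity) hQH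
    rwa [Real.log_pow] at hlog
  -- d and the double count
  set d : ℕ → ℕ := fun p => (S.filter (fun s => (p:ℤ) ∣ s)).card with hd
  have hswap : ∑ p ∈ T, d p = ∑ s ∈ S, (T.filter (fun (p:ℕ) => (p:ℤ) ∣ s)).card := by
    simp only [hd, Finset.card_filter]
    exact Finset.sum_comm
  have hsum : (∑ p ∈ T, (d p:ℝ)) * L ≤ (S.card:ℝ) * Real.log H := by
    have h1 : (∑ p ∈ T, (d p:ℝ)) = ∑ s ∈ S, ((T.filter (fun (p:ℕ) => (p:ℤ) ∣ s)).card : ℝ) := by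
      exact_mod_cast congrArg (fun k : ℕ => (k:ℝ)) hswap
    rw [h1, Finset.sum_mul]
    calc ∑ s ∈ S, ((T.filter (fun (p:ℕ) => (p:ℤ) ∣ s)).card : ℝ) * L
        ≤ ∑ _s ∈ S, Real.log H := Finset.sum_le_sum hes
      _ = (S.card:ℝ) * Real.log H := by rw [Finset.sum_const, nsmul_eq_mul]
  -- bad primes
  set B := T.filter (fun p => S.card < d p * (2*r)) with hB
  have hBsub : B ⊆ T := Finset.filter_subset _ _
  have hBcard : (B.card:ℝ) * L ≤ 2*(r:ℝ) * Real.log H := by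
    have h1 : B.card * (S.card+1) ≤ ∑ p ∈ B, d p * (2*r) := by
      calc B.card * (S.card+1) = ∑ _p ∈ B, (S.card+1) := by rw [Finset.sum_const, smul_eq_mul]
        _ ≤ ∑ p ∈ B, d p * (2*r) :=
            Finset.sum_le_sum fun p hp => (Finset.mem_filter.1 hp).2
    have h2 : ∑ p ∈ B, d p * (2*r) ≤ (∑ p ∈ T, d p) * (2*r) := by
      rw [← Finset.sum_mul]
      exact Nat.mul_le_mul_right _ (Finset.sum_le_sum_of_subset hBsub)
    have hcast : (B.card:ℝ) * ((S.card:ℝ)+1) ≤ (∑ p ∈ T, (d p:ℝ)) * (2*(r:ℝ)) := by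
      have := h1.trans h2
      exact_mod_cast this
    have h3 : (B.card:ℝ) * L * ((S.card:ℝ)+1) ≤ (2*(r:ℝ)*Real.log H) * ((S.card:ℝ)+1) := by
      have h4 : (B.card:ℝ) * ((S.card:ℝ)+1) * L ≤ (∑ p ∈ T, (d p:ℝ)) * (2*(r:ℝ)) * L :=
        mul_le_mul_of_nonneg_right hcast hLpos.le
      have h5 : (∑ p ∈ T, (d p:ℝ)) * (2*(r:ℝ)) * L ≤ (S.card:ℝ) * Real.log H * (2*(r:ℝ)) := by
        calc (∑ p ∈ T, (d p:ℝ)) * (2*(r:ℝ)) * L = ((∑ p ∈ T, (d p:ℝ)) * L) * (2*(r:ℝ)) := by ring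
          _ ≤ (S.card:ℝ)*Real.log H * (2*(r:ℝ)) :=
              mul_le_mul_of_nonneg_right hsum (by positivity)
      nlinarith [hlogH, hrR]
    exact le_of_mul_le_mul_right h3 (by positivity)
  -- lower bound on t
  have hC := auxC hn8
  have hlog4 : (6:ℝ)/5 ≤ Real.log 4 := by
    have h2 : Real.log 4 = 2 * Real.log 2 := by
      rw [show (4:ℝ) = 2^(2:ℕ) by norm_num, Real.log_pow]; norm_num
    have := Real.log_two_gt_d9
    rw [h2]; linarith
  have hlog2n : Real.log (2*(n:ℝ)) ≤ 2*L := by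
    have h1 : 2*(n:ℝ) ≤ Q^(2:ℕ) := by nlinarith
    have h2 := Real.log_le_log (by nlinarith) h1
    rwa [Real.log_pow, Nat.cast_ofNat] at h2
  have hnge : Q/2 ≤ (n:ℝ) := by
    have := Nat.sub_one_lt_floor Q
    simp only [← hn] at this
    linarith
  have hlognn : 0 ≤ Real.log (2*(n:ℝ)) := Real.log_nonneg (by nlinarith)
  have htL : Q ≤ 20 * (t:ℝ) * L := by
    have h1a : ((n:ℝ)/6) * (6/5) ≤ ((n:ℝ)/6) * Real.log 4 :=
      mul_le_mul_of_nonneg_left hlog4 (by positivity)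
    have h2 : ((t:ℝ)) * Real.log (2*(n:ℝ)) ≤ (t:ℝ) * (2*L) :=
      mul_le_mul_of_nonneg_left hlog2n (by positivity)
    linarith [hC]
  -- r is small
  have hrL : 40*(r:ℝ)*L ≤ Q := by
    have hlogQ : L ≤ 4 * Q ^ ((1:ℝ)/4) := log_le_four_rpow (by linarith)
    have h1 : Q^((1:ℝ)/4) * Q^((3:ℝ)/4) = Q := by rw [← Real.rpow_add hQpos]; norm_num
    have h2 : Q^((1:ℝ)/2) ≤ Q^((3:ℝ)/4) := Real.rpow_le_rpow_of_exponent_le (by linarith) (by norm_num)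
    have h3 : (160:ℝ)*(r:ℝ) ≤ Q^((1:ℝ)/2) := by
      rw [← Real.sqrt_eq_rpow]
      rw [show (160:ℝ)*(r:ℝ) = Real.sqrt ((160*(r:ℝ))^2) from (Real.sqrt_sq (by positivity)).symm]
      apply Real.sqrt_le_sqrt
      nlinarith
    have h4 : (0:ℝ) ≤ Q^((1:ℝ)/4) := by positivity
    nlinarith [h3.trans h2, mul_le_mul_of_nonneg_right (h3.trans h2) h4]
  have hBQ : (B.card:ℝ) * L * 40 ≤ Q := by
    have h80 : (80*(r:ℝ)) * Real.log H ≤ Q := hcQ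
    nlinarith [hBcard]
  -- choose P
  have hGT : r ≤ (T \ B).card := by
    have hcard : (T\B).card = t - B.card := Finset.card_sdiff_of_subset hBsub
    have hBt : B.card ≤ t := Finset.card_le_card hBsub
    have hreal : ((T\B).card : ℝ) = (t:ℝ) - (B.card:ℝ) := by
      rw [hcard, Nat.cast_sub hBt]
    have hfin : (r:ℝ) ≤ ((T\B).card : ℝ) := by
      rw [hreal]
      nlinarith [htL, hBQ, hrL, hLpos]
    exact_mod_cast hfin
  obtain ⟨P, hPsub, hPcard⟩ := Finset.exists_subset_card_eq hGT
  have hPT : ∀ p ∈ P, p ∈ T := fun p hp => (Finset.mem_sdiff.1 (hPsub hp)).1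
  have hPprime : ∀ p ∈ P, p.Prime := fun p hp => (hTmem p (hPT p hp)).1
  refine ⟨∏ p ∈ P, p, P, hPcard, fun p hp => hTmem p (hPT p hp), rfl,
    squarefree_prod_primes _ hPprime, ?_⟩
  set q := ∏ p ∈ P, p with hq
  set N := S.filter (fun s => ¬ Int.gcd s (q:ℤ) = 1) with hN
  have hNsub : N ⊆ P.biUnion (fun p => S.filter (fun s => (p:ℤ) ∣ s)) := by
    intro s hs
    obtain ⟨hsS, hg⟩ := Finset.mem_filter.1 hs
    have hs0 := (hS s hsS).1
    obtain ⟨ℓ, hℓp, hℓd⟩ := Nat.exists_prime_and_dvd hg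
    have hgq : (Int.gcd s (q:ℤ) : ℤ) ∣ (q:ℤ) := Int.gcd_dvd_right _ _
    have hgq' : Int.gcd s (q:ℤ) ∣ q := by exact_mod_cast hgq
    have hℓq : ℓ ∣ q := hℓd.trans hgq'
    obtain ⟨p, hpP, hℓp'⟩ := (Nat.Prime.prime hℓp).exists_mem_finset_dvd (hq ▸ hℓq)
    have hlp : ℓ = p := (Nat.prime_dvd_prime_iff_eq hℓp (hPprime p hpP)).1 hℓp'
    refine Finset.mem_biUnion.2 ⟨p, hpP, Finset.mem_filter.2 ⟨hsS, ?_⟩⟩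
    have h1 : (Int.gcd s (q:ℤ) : ℤ) ∣ s := Int.gcd_dvd_left _ _
    have h2 : (ℓ:ℤ) ∣ (Int.gcd s (q:ℤ) : ℤ) := Int.natCast_dvd_natCast.mpr hℓd
    rw [← hlp]
    exact h2.trans h1
  have hNcard : 2 * N.card ≤ S.card := by
    have h1 : N.card ≤ ∑ p ∈ P, d p :=
      (Finset.card_le_card hNsub).trans Finset.card_biUnion_le
    have h2 : ∀ p ∈ P, d p * (2*r) ≤ S.card := by
      intro p hp
      have hnotB := (Finset.mem_sdiff.1 (hPsub hp)).2
      have hpT := hPT p hp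
      by_contra hc
      push_neg at hc
      exact hnotB (Finset.mem_filter.2 ⟨hpT, hc⟩)
    have h3 : (∑ p ∈ P, d p) * (2*r) ≤ r * S.card := by
      calc (∑ p ∈ P, d p) * (2*r) = ∑ p ∈ P, d p * (2*r) := by rw [Finset.sum_mul]
        _ ≤ ∑ _p ∈ P, S.card := Finset.sum_le_sum h2
        _ = P.card * S.card := by rw [Finset.sum_const, smul_eq_mul]
        _ = r * S.card := by rw [hPcard]
    have h4 : N.card * (2*r) ≤ r * S.card := le_trans (Nat.mul_le_mul_right _ h1) h3
    have h5 : r * (2 * N.card) ≤ r * S.card := by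
      calc r * (2 * N.card) = N.card * (2*r) := by ring
        _ ≤ r * S.card := h4
    exact Nat.le_of_mul_le_mul_left h5 (by omega)
  have hfil : (S.filter (fun s => Int.gcd s (q:ℤ) = 1)).card + N.card = S.card :=
    Finset.card_filter_add_card_filter_not (fun s => Int.gcd s (q:ℤ) = 1)
  have hNr : (N.card:ℝ) * 2 ≤ (S.card:ℝ) := by exact_mod_cast (by omega : N.card * 2 ≤ S.card)
  have hfr : ((S.filter (fun s => Int.gcd s (q:ℤ) = 1)).card : ℝ) + (N.card:ℝ) = (S.card:ℝ) := by
    exact_mod_cast hfil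
  linarith
end

section
/- Let q ≥ 1 be an integer and G(X) = aX² + bX ∈ ℤ[X] with gcd(a, q) = 1. Then for any positive integer H, |∑_{z=1}^{H} e(G(z)/q)| ≪ H·q^{-1/2} + q^{1/2}·log q. -/
open Finset Complex

noncomputable section
namespace QES

variable (q : ℕ)

def eqc (x : ℤ) : ℂ := Complex.exp (2 * Real.pi * Complex.I * (x : ℂ) / (q : ℂ))

lemma conj_eqc (x : ℤ) : (starRingEnd ℂ) (eqc q x) = eqc q (-x) := by
  rw [eqc, eqc, ← Complex.exp_conj]
  congr 1
  simp only [map_div₀, map_mul, Complex.conj_I, Complex.conj_ofReal, map_ofNat,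
    map_intCast, map_natCast]
  push_cast; ring

lemma eqc_add (x y : ℤ) : eqc q (x + y) = eqc q x * eqc q y := by
  rw [eqc, eqc, eqc, ← Complex.exp_add]; congr 1; push_cast; ring

lemma eqc_mul_self (hq : q ≠ 0) (t : ℤ) : eqc q ((q : ℤ) * t) = 1 := by
  rw [eqc]
  have hq' : (q : ℂ) ≠ 0 := by exact_mod_cast hq
  have h : 2 * (Real.pi : ℂ) * Complex.I * (((q : ℤ) * t : ℤ) : ℂ) / (q : ℂ)
      = (t : ℂ) * (2 * Real.pi * Complex.I) := by push_cast; field_simp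
  rw [h, Complex.exp_int_mul_two_pi_mul_I]

lemma eqc_periodic (hq : q ≠ 0) (x t : ℤ) : eqc q (x + (q : ℤ) * t) = eqc q x := by
  rw [eqc_add, eqc_mul_self q hq, mul_one]

lemma norm_exp_sub_one (θ : ℝ) (h0 : 0 ≤ θ) (h1 : θ ≤ Real.pi) :
    2 / Real.pi * θ ≤ ‖Complex.exp ((θ : ℂ) * Complex.I) - 1‖ := by
  have hsq : ‖Complex.exp ((θ : ℂ) * Complex.I) - 1‖ ^ 2 = 2 - 2 * Real.cos θ := by
    rw [Complex.sq_norm, Complex.normSq_apply]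
    simp only [Complex.sub_re, Complex.sub_im, Complex.one_re, Complex.one_im,
      Complex.exp_ofReal_mul_I_re, Complex.exp_ofReal_mul_I_im]
    nlinarith [Real.sin_sq_add_cos_sq θ]
  have hsin : 2 - 2 * Real.cos θ = (2 * Real.sin (θ / 2)) ^ 2 := by
    have h2 := Real.sin_sq_eq_half_sub (θ / 2)
    rw [show 2 * (θ / 2) = θ by ring] at h2
    nlinarith
  have hs : 2 / Real.pi * (θ / 2) ≤ Real.sin (θ / 2) :=
    Real.mul_le_sin (by linarith) (by linarith)
  have hnn : (0 : ℝ) ≤ ‖Complex.exp ((θ : ℂ) * Complex.I) - 1‖ := norm_nonneg _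
  nlinarith [Real.pi_pos, hsq, hsin, hs, hnn]

lemma eqc_eq_exp (x : ℤ) : eqc q x = Complex.exp (((2 * Real.pi * x / q : ℝ) : ℂ) * Complex.I) := by
  rw [eqc]; congr 1; push_cast; ring

lemma norm_eqc_sub_one_ge (hq : 0 < q) (r : ℕ) (hr1 : 1 ≤ r) (hr2 : r < q) :
    4 * ((min r (q - r) : ℕ) : ℝ) / q ≤ ‖eqc q (r : ℤ) - 1‖ := by
  set d : ℕ := min r (q - r) with hd
  have hdq : 2 * d ≤ q := by
    have h1 : d ≤ r := Nat.min_le_left _ _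
    have h2 : d ≤ q - r := Nat.min_le_right _ _
    omega
  have hd1 : 1 ≤ d := by
    have : 1 ≤ q - r := by omega
    omega
  have hkey : ‖eqc q (r : ℤ) - 1‖ = ‖eqc q (d : ℤ) - 1‖ := by
    rcases min_cases r (q - r) with ⟨h, _⟩ | ⟨h, _⟩
    · rw [hd, h]
    · rw [hd, h]
      have hcast : ((q - r : ℕ) : ℤ) = -(r : ℤ) + (q : ℤ) * 1 := by
        push_cast [Nat.cast_sub hr2.le]; ring
      rw [hcast, eqc_periodic q hq.ne', ← conj_eqc]
      have : (starRingEnd ℂ) (eqc q (r:ℤ)) - 1 = (starRingEnd ℂ) (eqc q (r:ℤ) - 1) := by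
        rw [map_sub, map_one]
      rw [this, Complex.norm_conj]
  rw [hkey, eqc_eq_exp]
  have hπ := Real.pi_pos
  have hθ0 : (0:ℝ) ≤ 2 * Real.pi * (d : ℤ) / q := by positivity
  have hθ1 : 2 * Real.pi * ((d : ℤ) : ℝ) / q ≤ Real.pi := by
    rw [div_le_iff₀ (by exact_mod_cast hq)]
    have : (2 * d : ℝ) ≤ q := by exact_mod_cast hdq
    push_cast
    nlinarith
  have := norm_exp_sub_one (2 * Real.pi * ((d : ℤ) : ℝ) / q) hθ0 hθ1
  have hqpos : (0:ℝ) < q := by exact_mod_cast hq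
  calc 4 * (d : ℝ) / q = 2 / Real.pi * (2 * Real.pi * ((d : ℤ) : ℝ) / q) := by
        push_cast; field_simp; ring
    _ ≤ _ := this


lemma norm_eqc (x : ℤ) : ‖eqc q x‖ = 1 := by
  rw [eqc]
  have h : 2 * (Real.pi : ℂ) * Complex.I * (x : ℂ) / (q : ℂ)
      = ((2 * Real.pi * (x : ℝ) / (q : ℝ) : ℝ) : ℂ) * Complex.I := by
    push_cast; ring
  rw [h, Complex.norm_exp_ofReal_mul_I]

lemma eqc_mul_eq_zpow (r : ℕ) (w : ℤ) : eqc q ((r : ℤ) * w) = (eqc q (r : ℤ)) ^ w := by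
  rw [eqc, eqc, ← Complex.exp_int_mul]
  congr 1
  push_cast; ring

lemma norm_geom_sum_le (hq : 0 < q) (r : ℕ) (hr1 : 1 ≤ r) (hr2 : r < q) (m n : ℤ) :
    ‖∑ w ∈ Finset.Icc m n, eqc q ((r : ℤ) * w)‖
      ≤ (q : ℝ) / (2 * ((min r (q - r) : ℕ) : ℝ)) := by
  set d : ℕ := min r (q - r) with hdd
  have hd1 : 1 ≤ d := by
    have : 1 ≤ q - r := by omega
    simp [hdd]; omega
  have hdpos : (0:ℝ) < d := by exact_mod_cast hd1
  have hqpos : (0:ℝ) < q := by exact_mod_cast hq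
  set u : ℂ := eqc q (r : ℤ) with hu
  have hlow : 4 * (d : ℝ) / q ≤ ‖u - 1‖ := norm_eqc_sub_one_ge q hq r hr1 hr2
  have hne1 : u ≠ 1 := by
    intro h
    rw [h, sub_self, norm_zero] at hlow
    have : (0:ℝ) < 4 * (d : ℝ) / q := by positivity
    linarith
  have hu0 : u ≠ 0 := by
    intro h
    have := norm_eqc q (r : ℤ)
    rw [hu] at h; rw [h, norm_zero] at this; norm_num at this
  rcases le_or_gt m n with hmn | hmn
  · set N : ℕ := (n + 1 - m).toNat with hN
    have hsum : ∑ w ∈ Finset.Icc m n, eqc q ((r : ℤ) * w)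
        = u ^ m * ∑ j ∈ Finset.range N, u ^ j := by
      rw [Finset.mul_sum]
      apply Finset.sum_nbij' (i := fun (w : ℤ) => (w - m).toNat)
        (j := fun (k : ℕ) => m + (k : ℤ))
      · intro a ha
        simp only [Finset.mem_Icc] at ha
        simp only [Finset.mem_range]
        omega
      · intro k hk
        simp only [Finset.mem_range] at hk
        simp only [Finset.mem_Icc]
        omega
      · intro a ha
        simp only [Finset.mem_Icc] at ha
        omega
      · intro k hk
        simp only [Finset.mem_range] at hk
        omega
      · intro a ha
        simp only [Finset.mem_Icc] at ha
        rw [eqc_mul_eq_zpow]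
        rw [← hu, ← zpow_natCast u ((a - m).toNat), ← zpow_add₀ hu0]
        congr 1
        omega
    rw [hsum, geom_sum_eq hne1, norm_mul, norm_zpow, norm_eqc, one_zpow, one_mul,
      norm_div]
    have h2 : ‖u ^ N - 1‖ ≤ 2 := by
      calc ‖u ^ N - 1‖ ≤ ‖u ^ N‖ + ‖(1:ℂ)‖ := norm_sub_le _ _
        _ = 2 := by rw [norm_pow, norm_eqc]; norm_num
    have hpos : (0:ℝ) < ‖u - 1‖ := lt_of_lt_of_le (by positivity) hlow
    calc ‖u ^ N - 1‖ / ‖u - 1‖ ≤ 2 / (4 * (d : ℝ) / q) := by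
          gcongr
      _ = (q : ℝ) / (2 * (d : ℝ)) := by field_simp; ring
  · rw [Finset.Icc_eq_empty (by omega), Finset.sum_empty, norm_zero]
    positivity


variable (q : ℕ) [NeZero q]

/-- bound function on residues -/
def F (H : ℕ) (z : ZMod q) : ℝ :=
  if z = 0 then (H : ℝ) else (q : ℝ) / (2 * ((min z.val (q - z.val) : ℕ) : ℝ))

lemma F_nonneg (H : ℕ) (z : ZMod q) : 0 ≤ F q H z := by
  rw [F]
  split
  · positivity
  · positivity

lemma sum_Ico_block (G : ZMod q → ℝ) (M : ℤ) :
    ∑ h ∈ Finset.Ico M (M + (q : ℤ)), G ((h : ZMod q)) = ∑ z : ZMod q, G z := by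
  have hq : 0 < q := Nat.pos_of_ne_zero (NeZero.ne q)
  apply Finset.sum_nbij' (i := fun (h : ℤ) => (h : ZMod q))
    (j := fun (z : ZMod q) => M + (((z - (M : ZMod q)).val : ℕ) : ℤ))
  · intro a _; exact Finset.mem_univ _
  · intro z _
    simp only [Finset.mem_Ico]
    have := ZMod.val_lt (z - (M : ZMod q))
    omega
  · intro h hh
    simp only [Finset.mem_Ico] at hh
    have e1 : ((h : ZMod q) - (M : ZMod q)) = (((h - M).toNat : ℕ) : ZMod q) := by
      have h2 : (((h - M).toNat : ℕ) : ZMod q) = (((h - M : ℤ)) : ZMod q) := by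
        rw [← Int.cast_natCast, Int.toNat_of_nonneg (by omega : (0:ℤ) ≤ h - M)]
      rw [h2]; push_cast; ring
    rw [e1, ZMod.val_cast_of_lt (by omega : (h - M).toNat < q)]
    omega
  · intro z _
    push_cast
    rw [ZMod.natCast_val, ZMod.cast_id]
    ring
  · intro a _; rfl

lemma sum_two_mul_le (G : ZMod q → ℝ) (hG : ∀ z, 0 ≤ G z) :
    ∑ y : ZMod q, G (2 * y) ≤ 2 * ∑ z : ZMod q, G z := by
  classical
  have hq : 0 < q := Nat.pos_of_ne_zero (NeZero.ne q)
  rw [Finset.sum_comp G (fun y : ZMod q => 2 * y)]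
  have hcard : ∀ z : ZMod q, ({y ∈ (Finset.univ : Finset (ZMod q)) | 2 * y = z}).card ≤ 2 := by
    intro z
    by_cases hz : ({y ∈ (Finset.univ : Finset (ZMod q)) | 2 * y = z}).Nonempty
    · obtain ⟨y₀, hy₀⟩ := hz
      simp only [Finset.mem_filter, Finset.mem_univ, true_and] at hy₀
      have hsub : {y ∈ (Finset.univ : Finset (ZMod q)) | 2 * y = z}
          ⊆ {y₀, y₀ + ((q / 2 : ℕ) : ZMod q)} := by
        intro y hy
        simp only [Finset.mem_filter, Finset.mem_univ, true_and] at hy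
        have ht : 2 * (y - y₀) = 0 := by rw [mul_sub, hy, hy₀, sub_self]
        set t : ZMod q := y - y₀ with htd
        have hval : (q : ℕ) ∣ 2 * t.val := by
          have : ((2 * t.val : ℕ) : ZMod q) = 0 := by
            push_cast
            rw [ZMod.natCast_val, ZMod.cast_id]
            exact ht
          exact (ZMod.natCast_eq_zero_iff _ _).mp this
        have hvlt := ZMod.val_lt t
        have : t.val = 0 ∨ 2 * t.val = q := by
          rcases hval with ⟨c, hc⟩
          have hc2 : c < 2 := by
            by_contra hcon
            push_neg at hcon
            have := Nat.mul_le_mul_left q hcon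
            omega
          interval_cases c <;> omega
        simp only [Finset.mem_insert, Finset.mem_singleton]
        rcases this with h0 | hq2
        · left
          have : t = 0 := by
            have := ZMod.natCast_val (n := q) (R := ZMod q) t
            rw [ZMod.cast_id] at this
            rw [← this, h0, Nat.cast_zero]
          rw [htd] at this
          have : y = y₀ := by linear_combination this
          exact this
        · right
          have hval2 : t.val = q / 2 := by omega
          have : t = ((q / 2 : ℕ) : ZMod q) := by
            have hv := ZMod.natCast_val (n := q) (R := ZMod q) t
            rw [ZMod.cast_id] at hv
            rw [← hv, hval2]
          rw [htd] at this
          linear_combination this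
      calc _ ≤ ({y₀, y₀ + ((q / 2 : ℕ) : ZMod q)} : Finset (ZMod q)).card :=
            Finset.card_le_card hsub
        _ ≤ 2 := Finset.card_insert_le _ _ |>.trans (by simp)
    · rw [Finset.not_nonempty_iff_eq_empty] at hz
      rw [hz]; simp
  calc ∑ z ∈ Finset.univ.image (fun y : ZMod q => 2 * y),
        ({y ∈ (Finset.univ : Finset (ZMod q)) | 2 * y = z}).card • G z
      ≤ ∑ z ∈ Finset.univ.image (fun y : ZMod q => 2 * y), 2 * G z := by
        apply Finset.sum_le_sum
        intro z _
        rw [nsmul_eq_mul]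
        have := hcard z
        have := hG z
        have hc : (({y ∈ (Finset.univ : Finset (ZMod q)) | 2 * y = z}).card : ℝ) ≤ 2 := by
          exact_mod_cast hcard z
        nlinarith
    _ ≤ ∑ z : ZMod q, 2 * G z := by
        apply Finset.sum_le_sum_of_subset_of_nonneg (Finset.subset_univ _)
        intro z _ _
        have := hG z; linarith
    _ = 2 * ∑ z : ZMod q, G z := by rw [Finset.mul_sum]


variable (q : ℕ)



lemma eqc_zero' : eqc q 0 = 1 := by simp [eqc]

lemma norm_sum_le_F [NeZero q] (H : ℕ) (k m n : ℤ)
    (hcard : (Finset.Icc m n).card ≤ H) :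
    ‖∑ w ∈ Finset.Icc m n, eqc q (k * w)‖ ≤ F q H ((k : ZMod q)) := by
  have hq : 0 < q := Nat.pos_of_ne_zero (NeZero.ne q)
  set z : ZMod q := (k : ZMod q) with hz
  have hdvd : (q : ℤ) ∣ k - (z.val : ℤ) := by
    rw [← ZMod.intCast_zmod_eq_zero_iff_dvd]
    push_cast
    rw [ZMod.natCast_val, ZMod.cast_id, ← hz, sub_self]
  obtain ⟨t, ht⟩ := hdvd
  have hterm : ∀ w : ℤ, eqc q (k * w) = eqc q ((z.val : ℤ) * w) := by
    intro w
    have : k * w = (z.val : ℤ) * w + (q : ℤ) * (t * w) := by linear_combination w * ht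
    rw [this, eqc_periodic q hq.ne']
  rw [Finset.sum_congr rfl (fun w _ => hterm w)]
  by_cases h0 : z = 0
  · have hval : z.val = 0 := by rw [h0, ZMod.val_zero]
    rw [F, if_pos h0]
    have : ∀ w ∈ Finset.Icc m n, eqc q ((z.val : ℤ) * w) = 1 := by
      intro w _
      rw [hval]
      simpa using eqc_zero' q
    rw [Finset.sum_congr rfl this, Finset.sum_const, nsmul_eq_mul, mul_one]
    simpa using (by exact_mod_cast hcard : ((Finset.Icc m n).card : ℝ) ≤ (H : ℝ))
  · rw [F, if_neg h0]
    exact norm_geom_sum_le q hq z.val (ZMod.val_pos.mpr h0) (ZMod.val_lt z) m n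

lemma sum_unit_mul [NeZero q] (G : ZMod q → ℝ) (α : ZMod q) (hα : IsUnit α) :
    ∑ x : ZMod q, G (α * x) = ∑ x : ZMod q, G x := by
  obtain ⟨u, rfl⟩ := hα
  exact Fintype.sum_bijective _ (Units.mulLeft_bijective u) _ _ (fun x => rfl)


variable (q : ℕ)


lemma harmonic_Icc (hq : 1 ≤ q) :
    ∑ v ∈ Finset.Icc 1 (q - 1), (1 : ℝ) / v ≤ 1 + Real.log q := by
  have h1 : ∑ v ∈ Finset.Icc 1 (q - 1), (1 : ℝ) / v = (harmonic (q - 1) : ℝ) := by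
    rw [harmonic_eq_sum_Icc]
    push_cast
    simp [one_div]
  rw [h1]
  calc (harmonic (q-1) : ℝ) ≤ 1 + Real.log (q - 1 : ℕ) := harmonic_le_one_add_log _
    _ ≤ 1 + Real.log q := by
      have hlog : Real.log ((q-1:ℕ) : ℝ) ≤ Real.log q := by
        rcases Nat.lt_or_ge q 2 with h | h
        · interval_cases q
          · simp
        · apply Real.log_le_log
          · have : 0 < q - 1 := by omega
            exact_mod_cast this
          · have : q - 1 ≤ q := by omega
            exact_mod_cast this
      linarith

lemma sum_F_le [NeZero q] (H : ℕ) :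
    ∑ z : ZMod q, F q H z ≤ (H : ℝ) + (q : ℝ) * (1 + Real.log q) := by
  classical
  have hq : 1 ≤ q := Nat.pos_of_ne_zero (NeZero.ne q)
  have hsplit : ∑ z : ZMod q, F q H z
      = F q H 0 + ∑ z ∈ Finset.univ.erase (0 : ZMod q), F q H z :=
    (Finset.add_sum_erase _ _ (Finset.mem_univ 0)).symm
  have hF0 : F q H 0 = H := by rw [F, if_pos rfl]
  have herase : ∑ z ∈ Finset.univ.erase (0 : ZMod q), F q H z
      = ∑ v ∈ Finset.Icc 1 (q - 1), (q : ℝ) / (2 * ((min v (q - v) : ℕ) : ℝ)) := by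
    apply Finset.sum_nbij' (i := fun z : ZMod q => z.val) (j := fun v : ℕ => (v : ZMod q))
    · intro z hz
      simp only [Finset.mem_erase, Finset.mem_univ, and_true] at hz
      simp only [Finset.mem_Icc]
      have := ZMod.val_lt z
      have := ZMod.val_pos.mpr hz
      omega
    · intro v hv
      simp only [Finset.mem_Icc] at hv
      simp only [Finset.mem_erase, Finset.mem_univ, and_true]
      intro h0
      have := (ZMod.natCast_eq_zero_iff v q).mp h0
      have := Nat.le_of_dvd (by omega) this
      omega
    · intro z _
      rw [ZMod.natCast_val, ZMod.cast_id]
    · intro v hv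
      simp only [Finset.mem_Icc] at hv
      rw [ZMod.val_cast_of_lt (by omega)]
    · intro z hz
      simp only [Finset.mem_erase, Finset.mem_univ, and_true] at hz
      rw [F, if_neg hz]
  have hterm : ∀ v ∈ Finset.Icc 1 (q-1),
      (q : ℝ) / (2 * ((min v (q - v) : ℕ) : ℝ)) ≤ (q:ℝ)/(2*v) + (q:ℝ)/(2*(q-v : ℕ)) := by
    intro v hv
    simp only [Finset.mem_Icc] at hv
    have h1 : 1 ≤ v := hv.1
    have h2 : 1 ≤ q - v := by omega
    rcases min_cases v (q - v) with ⟨h, _⟩ | ⟨h, _⟩ <;> rw [h]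
    · have : (0:ℝ) ≤ (q:ℝ)/(2*(q-v : ℕ)) := by positivity
      linarith
    · have : (0:ℝ) ≤ (q:ℝ)/(2*v) := by positivity
      linarith
  have hrefl : ∑ v ∈ Finset.Icc 1 (q-1), (q:ℝ)/(2*(q-v : ℕ))
      = ∑ v ∈ Finset.Icc 1 (q-1), (q:ℝ)/(2*v) := by
    apply Finset.sum_nbij' (i := fun v => q - v) (j := fun v => q - v)
    · intro v hv; simp only [Finset.mem_Icc] at *; omega
    · intro v hv; simp only [Finset.mem_Icc] at *; omega
    · intro v hv; simp only [Finset.mem_Icc] at hv; omega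
    · intro v hv; simp only [Finset.mem_Icc] at hv; omega
    · intro v _; rfl
  have hharm : ∑ v ∈ Finset.Icc 1 (q-1), (q:ℝ)/(2*v) ≤ (q:ℝ)/2 * (1 + Real.log q) := by
    have : ∑ v ∈ Finset.Icc 1 (q-1), (q:ℝ)/(2*v)
        = (q:ℝ)/2 * ∑ v ∈ Finset.Icc 1 (q-1), (1:ℝ)/v := by
      rw [Finset.mul_sum]
      apply Finset.sum_congr rfl
      intro v _
      field_simp
    rw [this]
    have hlog : (0:ℝ) ≤ 1 + Real.log q := by
      have : (0:ℝ) ≤ Real.log q := Real.log_nonneg (by exact_mod_cast hq)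
      linarith
    have := harmonic_Icc q hq
    have hq2 : (0:ℝ) ≤ (q:ℝ)/2 := by positivity
    nlinarith
  calc ∑ z : ZMod q, F q H z
      = (H:ℝ) + ∑ v ∈ Finset.Icc 1 (q - 1), (q : ℝ) / (2 * ((min v (q - v) : ℕ) : ℝ)) := by
        rw [hsplit, hF0, herase]
    _ ≤ (H:ℝ) + (∑ v ∈ Finset.Icc 1 (q-1), ((q:ℝ)/(2*v) + (q:ℝ)/(2*(q-v : ℕ)))) := by
        gcongr with v hv
        exact hterm v hv
    _ = (H:ℝ) + 2 * ∑ v ∈ Finset.Icc 1 (q-1), (q:ℝ)/(2*v) := by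
        rw [Finset.sum_add_distrib, hrefl]; ring
    _ ≤ (H:ℝ) + (q:ℝ) * (1 + Real.log q) := by nlinarith [hharm]


variable (q : ℕ)


lemma sum_blocks [NeZero q] (G : ZMod q → ℝ) (M : ℤ) (n : ℕ) :
    ∑ h ∈ Finset.Ico M (M + (n : ℤ) * q), G ((h : ZMod q))
      = n * ∑ z : ZMod q, G z := by
  induction n generalizing M with
  | zero => simp
  | succ n ih =>
    have hq : 0 < q := Nat.pos_of_ne_zero (NeZero.ne q)
    have h1 : M ≤ M + (n : ℤ) * q := by
      have : (0:ℤ) ≤ (n : ℤ) * q := by positivity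
      omega
    have h3 : M + ((n+1:ℕ) : ℤ) * q = (M + (n:ℤ)*q) + (q:ℤ) := by push_cast; ring
    have h2 : M + (n : ℤ) * q ≤ (M + (n:ℤ)*q) + (q:ℤ) := by
      have : (0:ℤ) ≤ (q:ℤ) := by positivity
      omega
    rw [h3, ← Finset.Ico_union_Ico_eq_Ico h1 h2,
      Finset.sum_union (Finset.Ico_disjoint_Ico_consecutive _ _ _), ih M,
      sum_Ico_block q G (M + (n:ℤ)*q)]
    push_cast
    ring

lemma isUnit_of_gcd (a : ℤ) (h : Int.gcd a q = 1) : IsUnit ((a : ℤ) : ZMod q) := by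
  have hcop : IsCoprime (a : ℤ) (q : ℤ) := Int.isCoprime_iff_gcd_eq_one.mpr h
  obtain ⟨u, v, huv⟩ := hcop
  apply IsUnit.of_mul_eq_one ((u : ℤ) : ZMod q)
  have : ((u * a + v * q : ℤ) : ZMod q) = 1 := by rw [huv]; simp
  push_cast at this
  rw [ZMod.natCast_self] at this
  rw [mul_comm]
  linear_combination this

lemma count_le [NeZero q] (a : ℤ) (ha : IsUnit ((a : ℤ) : ZMod q)) (H : ℕ) (hH : 1 ≤ H) :
    ∑ h ∈ Finset.Icc (1 - (H:ℤ)) ((H:ℤ) - 1), F q H ((2 * a * h : ℤ) : ZMod q)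
      ≤ (((2*H - 1 + (q-1))/q : ℕ) : ℝ) * (2 * ∑ z : ZMod q, F q H z) := by
  have hq : 0 < q := Nat.pos_of_ne_zero (NeZero.ne q)
  set n : ℕ := (2*H - 1 + (q-1))/q with hn
  set G : ZMod q → ℝ := fun x => F q H (2 * ((a : ℤ) : ZMod q) * x) with hG
  have hGn : ∀ x, 0 ≤ G x := fun x => F_nonneg q H _
  have hcongr : ∀ h : ℤ, F q H ((2 * a * h : ℤ) : ZMod q) = G ((h : ZMod q)) := by
    intro h
    rw [hG]
    congr 1
    push_cast
    ring
  have hnq : (2 * (H:ℤ) - 1) ≤ (n:ℤ) * q := by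
    set r : ℕ := (2*H - 1 + (q-1)) % q with hr
    have h2 : q * n + r = 2*H - 1 + (q-1) := by
      rw [hn, hr]; exact Nat.div_add_mod _ _
    have h3 : r < q := by rw [hr]; exact Nat.mod_lt _ hq
    have h4 := congrArg (Nat.cast : ℕ → ℤ) h2
    push_cast [Nat.cast_sub (by omega : 1 ≤ 2*H), Nat.cast_sub (by omega : 1 ≤ q)] at h4
    have h5 : ((r : ℕ) : ℤ) < (q:ℤ) := by exact_mod_cast h3
    linarith
  calc ∑ h ∈ Finset.Icc (1 - (H:ℤ)) ((H:ℤ) - 1), F q H ((2 * a * h : ℤ) : ZMod q)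
      = ∑ h ∈ Finset.Icc (1 - (H:ℤ)) ((H:ℤ) - 1), G ((h : ZMod q)) := by
        exact Finset.sum_congr rfl (fun h _ => hcongr h)
    _ ≤ ∑ h ∈ Finset.Ico (1 - (H:ℤ)) (1 - (H:ℤ) + (n:ℤ) * q), G ((h : ZMod q)) := by
        apply Finset.sum_le_sum_of_subset_of_nonneg
        · intro h hh
          simp only [Finset.mem_Icc] at hh
          simp only [Finset.mem_Ico]
          constructor
          · exact hh.1
          · have := hh.2
            linarith [hnq]
        · intro h _ _
          exact hGn _
    _ = n * ∑ z : ZMod q, G z := sum_blocks q G _ n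
    _ = n * ∑ y : ZMod q, F q H (2 * y) := by
        congr 1
        have := sum_unit_mul q (fun y => F q H (2 * y)) ((a : ℤ) : ZMod q) ha
        rw [← this]
        apply Finset.sum_congr rfl
        intro x _
        rw [hG]
        simp only []
        congr 1
        ring
    _ ≤ n * (2 * ∑ z : ZMod q, F q H z) := by
        have h2 := sum_two_mul_le q (fun z => F q H z) (fun z => F_nonneg q H z)
        have hn0 : (0:ℝ) ≤ (n:ℕ) := Nat.cast_nonneg n
        exact mul_le_mul_of_nonneg_left h2 hn0


variable (q : ℕ)


lemma weyl [NeZero q] (a b : ℤ) (H : ℕ) (hH : 1 ≤ H) :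
    ‖∑ z ∈ Finset.Icc (1:ℤ) (H:ℤ), eqc q (a*z^2 + b*z)‖^2
      ≤ ∑ h ∈ Finset.Icc (1-(H:ℤ)) ((H:ℤ)-1), F q H ((2*a*h : ℤ) : ZMod q) := by
  classical
  set I : Finset ℤ := Finset.Icc (1:ℤ) (H:ℤ) with hI
  set J : Finset ℤ := Finset.Icc (1-(H:ℤ)) ((H:ℤ)-1) with hJ
  set f : ℤ → ℂ := fun z => eqc q (a*z^2 + b*z) with hf
  set S : ℂ := ∑ z ∈ I, f z with hS
  have h1 : ‖S‖^2 = ‖S * (starRingEnd ℂ) S‖ := by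
    rw [Complex.mul_conj]
    rw [Complex.norm_real, Real.norm_eq_abs, _root_.abs_of_nonneg (Complex.normSq_nonneg S),
      Complex.normSq_eq_norm_sq]
  have h2 : S * (starRingEnd ℂ) S = ∑ w ∈ I, ∑ z ∈ I, f z * (starRingEnd ℂ) (f w) := by
    rw [hS, map_sum, Finset.sum_mul_sum]
    exact Finset.sum_comm
  have h3 : ∀ z w : ℤ, f z * (starRingEnd ℂ) (f w)
      = eqc q ((a*z^2 + b*z) - (a*w^2 + b*w)) := by
    intro z w
    rw [hf]
    simp only []
    rw [conj_eqc, ← eqc_add, sub_eq_add_neg]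
  have h4 : ∀ w ∈ I, ∑ z ∈ I, f z * (starRingEnd ℂ) (f w)
      = ∑ h ∈ J, (if w + h ∈ I then eqc q ((a*(w+h)^2 + b*(w+h)) - (a*w^2 + b*w)) else 0) := by
    intro w hw
    rw [Finset.sum_ite, Finset.sum_const_zero, add_zero]
    symm
    refine Finset.sum_nbij' (i := fun h : ℤ => w + h) (j := fun z : ℤ => z - w) ?_ ?_ ?_ ?_ ?_
    · intro h hh
      simp only [Finset.mem_filter] at hh
      exact hh.2
    · intro z hz
      simp only [hI, Finset.mem_Icc] at hz
      have hw' : 1 ≤ w ∧ w ≤ (H:ℤ) := by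
        simpa [hI, Finset.mem_Icc] using hw
      simp only [Finset.mem_filter, hJ, hI, Finset.mem_Icc]
      omega
    · intro h _; ring
    · intro z _; ring
    · intro h hh
      rw [h3]
  have h5 : ∀ h : ℤ, ‖∑ w ∈ I, (if w + h ∈ I then
        eqc q ((a*(w+h)^2 + b*(w+h)) - (a*w^2 + b*w)) else 0)‖
      ≤ F q H (((2*a*h : ℤ) : ZMod q)) := by
    intro h
    have e1 : ∑ w ∈ I, (if w + h ∈ I then
          eqc q ((a*(w+h)^2 + b*(w+h)) - (a*w^2 + b*w)) else 0)
        = ∑ w ∈ Finset.Icc (max 1 (1-h)) (min (H:ℤ) ((H:ℤ)-h)),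
            eqc q ((a*h^2 + b*h) + (2*a*h) * w) := by
      rw [Finset.sum_ite, Finset.sum_const_zero, add_zero]
      have hfil : I.filter (fun w => w + h ∈ I)
          = Finset.Icc (max 1 (1-h)) (min (H:ℤ) ((H:ℤ)-h)) := by
        ext w
        simp only [Finset.mem_filter, hI, Finset.mem_Icc, le_max_iff, min_le_iff,
          max_le_iff, le_min_iff]
        omega
      rw [hfil]
      apply Finset.sum_congr rfl
      intro w _
      congr 1
      ring
    rw [e1]
    have e2 : ∑ w ∈ Finset.Icc (max 1 (1-h)) (min (H:ℤ) ((H:ℤ)-h)),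
          eqc q ((a*h^2 + b*h) + (2*a*h) * w)
        = eqc q (a*h^2 + b*h) * ∑ w ∈ Finset.Icc (max 1 (1-h)) (min (H:ℤ) ((H:ℤ)-h)),
            eqc q ((2*a*h) * w) := by
      rw [Finset.mul_sum]
      apply Finset.sum_congr rfl
      intro w _
      rw [← eqc_add]
    rw [e2, norm_mul, norm_eqc, one_mul]
    apply norm_sum_le_F
    rw [Int.card_Icc]
    have : (min (H:ℤ) ((H:ℤ)-h) + 1 - max 1 (1-h)) ≤ (H:ℤ) := by omega
    omega
  calc ‖S‖^2 = ‖∑ w ∈ I, ∑ z ∈ I, f z * (starRingEnd ℂ) (f w)‖ := by rw [h1, h2]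
    _ = ‖∑ w ∈ I, ∑ h ∈ J, (if w + h ∈ I then
          eqc q ((a*(w+h)^2 + b*(w+h)) - (a*w^2 + b*w)) else 0)‖ := by
        congr 1
        exact Finset.sum_congr rfl h4
    _ = ‖∑ h ∈ J, ∑ w ∈ I, (if w + h ∈ I then
          eqc q ((a*(w+h)^2 + b*(w+h)) - (a*w^2 + b*w)) else 0)‖ := by
        rw [Finset.sum_comm]
    _ ≤ ∑ h ∈ J, ‖∑ w ∈ I, (if w + h ∈ I then
          eqc q ((a*(w+h)^2 + b*(w+h)) - (a*w^2 + b*w)) else 0)‖ := norm_sum_le _ _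
    _ ≤ ∑ h ∈ J, F q H (((2*a*h : ℤ) : ZMod q)) := Finset.sum_le_sum (fun h _ => h5 h)


end QES
end

open QES in
/-- The quadratic exponential sum `∑_{z=1}^H e((az² + bz)/q)` with `gcd(a,q)=1`
is `O(H q^{-1/2} + q^{1/2} log q)`. -/
theorem quadratic_exponential_sum_bound :
    ∃ c : ℝ, ∀ q : ℕ, 1 ≤ q → ∀ a b : ℤ, Int.gcd a q = 1 → ∀ H : ℕ, 1 ≤ H →
      ‖∑ z ∈ Finset.Icc 1 H,
          Complex.exp (2 * Real.pi * Complex.I * ((a * z ^ 2 + b * z : ℤ) : ℂ) / (q : ℂ))‖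
        ≤ c * ((H : ℝ) / Real.sqrt q + Real.sqrt q * Real.log q) := by
  use 100
  intro q hq a b hgcd H hH
  haveI : NeZero q := ⟨by omega⟩
  have hsum : ∑ z ∈ Finset.Icc 1 H,
        Complex.exp (2 * Real.pi * Complex.I * ((a * z ^ 2 + b * z : ℤ) : ℂ) / (q : ℂ))
      = ∑ z ∈ Finset.Icc (1:ℤ) (H:ℤ), eqc q (a*z^2 + b*z) := by
    refine Finset.sum_nbij' (i := fun z : ℕ => (z:ℤ)) (j := Int.toNat) ?_ ?_ ?_ ?_ ?_
    · intro z hz; simp only [Finset.mem_Icc] at *; omega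
    · intro z hz; simp only [Finset.mem_Icc] at *; omega
    · intro z _; simp
    · intro z hz
      simp only [Finset.mem_Icc] at hz
      show ((z.toNat : ℕ) : ℤ) = z
      omega
    · intro z _; rfl
  rw [hsum]
  by_cases hq1 : q = 1
  · subst hq1
    have htriv : ‖∑ z ∈ Finset.Icc (1:ℤ) (H:ℤ), eqc 1 (a*z^2 + b*z)‖ ≤ (H:ℝ) := by
      calc ‖∑ z ∈ Finset.Icc (1:ℤ) (H:ℤ), eqc 1 (a*z^2 + b*z)‖
          ≤ ∑ z ∈ Finset.Icc (1:ℤ) (H:ℤ), ‖eqc 1 (a*z^2 + b*z)‖ := norm_sum_le _ _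
        _ = ∑ z ∈ Finset.Icc (1:ℤ) (H:ℤ), 1 := by
            exact Finset.sum_congr rfl (fun z _ => norm_eqc 1 _)
        _ = ((Finset.Icc (1:ℤ) (H:ℤ)).card : ℝ) := by rw [Finset.sum_const]; simp
        _ = (H:ℝ) := by rw [Int.card_Icc]; congr 1; omega
    simp only [Nat.cast_one, Real.sqrt_one, Real.log_one, mul_zero, add_zero, div_one]
    have : (1:ℝ) ≤ (H:ℝ) := by exact_mod_cast hH
    linarith
  · have hq2 : 2 ≤ q := by omega
    have hq0 : (0:ℝ) < q := by positivity
    have hq2R : (2:ℝ) ≤ (q:ℝ) := by exact_mod_cast hq2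
    have hH1 : (1:ℝ) ≤ (H:ℝ) := by exact_mod_cast hH
    set s : ℝ := Real.sqrt q with hs
    set L : ℝ := Real.log q with hL
    have hs2 : s^2 = q := Real.sq_sqrt (by positivity)
    have hs0 : 0 < s := Real.sqrt_pos.mpr hq0
    have hL2 : (1/2 : ℝ) ≤ L := by
      have h1 : Real.log 2 ≤ L := by
        rw [hL]; exact Real.log_le_log (by norm_num) hq2R
      have := Real.log_two_gt_d9
      linarith
    have hL0 : 0 ≤ L := by linarith
    set X : ℝ := (H:ℝ) / s with hX
    have hX0 : 0 ≤ X := by positivity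
    have hXs : X * s = (H:ℝ) := div_mul_cancel₀ _ hs0.ne'
    -- main chain
    have hunit := isUnit_of_gcd q a hgcd
    have hw := weyl q a b H hH
    have hc := count_le q a hunit H hH
    have hsF := sum_F_le q H
    have hsF0 : 0 ≤ ∑ z : ZMod q, F q H z :=
      Finset.sum_nonneg (fun z _ => F_nonneg q H z)
    set n : ℕ := (2*H - 1 + (q-1))/q with hn
    have hnR : (n:ℝ) ≤ (2*(H:ℝ) - 2 + q)/q := by
      have he : 2*H - 1 + (q-1) = 2*H - 2 + q := by omega
      have h1 : (n:ℝ) ≤ ((2*H - 2 + q : ℕ) : ℝ) / ((q:ℕ):ℝ) := by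
        rw [hn, he]; exact Nat.cast_div_le
      have h2 : ((2*H - 2 + q : ℕ) : ℝ) = 2*(H:ℝ) - 2 + q := by
        push_cast [Nat.cast_sub (by omega : 2 ≤ 2*H)]; ring
      rw [h2] at h1; exact h1
    have hB : ‖∑ z ∈ Finset.Icc (1:ℤ) (H:ℤ), eqc q (a*z^2 + b*z)‖^2
        ≤ ((2*(H:ℝ) - 2 + q)/q) * (2*((H:ℝ) + q*(1+L))) := by
      calc ‖∑ z ∈ Finset.Icc (1:ℤ) (H:ℤ), eqc q (a*z^2 + b*z)‖^2
          ≤ (n:ℝ) * (2 * ∑ z : ZMod q, F q H z) := hw.trans hc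
        _ ≤ ((2*(H:ℝ) - 2 + q)/q) * (2*((H:ℝ) + q*(1+L))) := by
            apply mul_le_mul hnR (by linarith) (by linarith)
              (div_nonneg (by linarith) (le_of_lt hq0))
    have hkey : ((2*(H:ℝ) - 2 + q)/q) * (2*((H:ℝ) + q*(1+L))) * q
        = (2*(H:ℝ) - 2 + q) * (2*((H:ℝ) + q*(1+L))) := by
      field_simp
    have hexp : (100*(X + s*L))^2 * q = 10000 * ((H:ℝ) + q*L)^2 := by
      rw [← hs2, ← hXs]; ring
    have hnum : (2*(H:ℝ) - 2 + q) * (2*((H:ℝ) + q*(1+L))) ≤ 10000 * ((H:ℝ) + q*L)^2 := by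
      nlinarith [mul_nonneg (mul_nonneg (by linarith : (0:ℝ) ≤ 2*L-1) (by linarith : (0:ℝ) ≤ (H:ℝ))) (le_of_lt hq0),
        mul_nonneg (mul_nonneg (by linarith : (0:ℝ) ≤ 2*L-1) (le_of_lt hq0)) (le_of_lt hq0),
        mul_nonneg (mul_nonneg (mul_nonneg (by linarith : (0:ℝ) ≤ 2*L-1) (le_of_lt hq0)) (le_of_lt hq0)) hL0,
        mul_nonneg (mul_nonneg (mul_nonneg (by linarith : (0:ℝ) ≤ (H:ℝ)) hL0) (le_of_lt hq0)) (by linarith : (0:ℝ) ≤ (H:ℝ)),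
        sq_nonneg ((H:ℝ) - q*L), sq_nonneg ((H:ℝ) + q*L), mul_pos hq0 hq0,
        mul_nonneg (mul_nonneg hL0 (le_of_lt hq0)) (by linarith : (0:ℝ) ≤ (H:ℝ))]
    have hfinal : ((2*(H:ℝ) - 2 + q)/q) * (2*((H:ℝ) + q*(1+L)))
        ≤ (100*(X + s*L))^2 := by
      rw [← mul_le_mul_iff_of_pos_right hq0, hkey, hexp]
      exact hnum
    have hsq : ‖∑ z ∈ Finset.Icc (1:ℤ) (H:ℤ), eqc q (a*z^2 + b*z)‖^2
        ≤ (100*(X + s*L))^2 := hB.trans hfinal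
    have := Real.sqrt_le_sqrt hsq
    rwa [Real.sqrt_sq (norm_nonneg _), Real.sqrt_sq (by positivity)] at this
end

section
/- Let u, h be integers with h ≥ 2, let d ≥ 1, and let Z = { ∑_{ν=0}^{d} C(d,ν)·z_ν·u^{d-ν} : z_ν ∈ ℤ, 0 ≤ z_ν ≤ n·h^ν for ν = 0, ..., d }. Then for every (x_1, ..., x_n) ∈ [u+1, u+h]^n one has x_1^d + ⋯ + x_n^d ∈ Z, and #Z ≪ h^{d(d+1)/2}, with implied constant depending only on n and d. -/
open Finset

/-- Every power sum `x_1^d + ⋯ + x_n^d` with coordinates in `[u+1,u+h]` lies in the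
set `Z = {∑_ν C(d,ν) z_ν u^{d-ν} : 0 ≤ z_ν ≤ n h^ν}`, and `#Z ≪ h^{d(d+1)/2}`. -/
theorem power_sum_value_set (n d : ℕ) (hn : 1 ≤ n) (hd : 1 ≤ d) :
    ∃ C : ℝ, ∀ u h : ℤ, 2 ≤ h →
      (∀ x : Fin n → ℤ, (∀ i, x i ∈ Set.Icc (u + 1) (u + h)) →
        (∑ i, x i ^ d) ∈
          {z : ℤ | ∃ zv : Fin (d + 1) → ℤ,
            (∀ ν : Fin (d + 1), 0 ≤ zv ν ∧ zv ν ≤ n * h ^ (ν : ℕ)) ∧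
            z = ∑ ν : Fin (d + 1), (d.choose ν) * zv ν * u ^ (d - (ν : ℕ))}) ∧
      ({z : ℤ | ∃ zv : Fin (d + 1) → ℤ,
          (∀ ν : Fin (d + 1), 0 ≤ zv ν ∧ zv ν ≤ n * h ^ (ν : ℕ)) ∧
          z = ∑ ν : Fin (d + 1), (d.choose ν) * zv ν * u ^ (d - (ν : ℕ))}.ncard : ℝ)
        ≤ C * (h : ℝ) ^ (d * (d + 1) / 2) := by
  refine ⟨((n + 1 : ℕ) : ℝ) ^ (d + 1), fun u h hh => ⟨?_, ?_⟩⟩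
  · intro x hx
    have ht : ∀ i, 1 ≤ x i - u ∧ x i - u ≤ h := by
      intro i
      have := hx i
      rw [Set.mem_Icc] at this
      constructor <;> linarith [this.1, this.2]
    refine ⟨fun ν => ∑ i, (x i - u) ^ (ν : ℕ), fun ν => ⟨?_, ?_⟩, ?_⟩
    · exact Finset.sum_nonneg fun i _ => pow_nonneg (by linarith [(ht i).1]) _
    · calc ∑ i, (x i - u) ^ (ν : ℕ) ≤ ∑ _i : Fin n, h ^ (ν : ℕ) :=
            Finset.sum_le_sum fun i _ =>
              pow_le_pow_left₀ (by linarith [(ht i).1]) (ht i).2 _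
        _ = n * h ^ (ν : ℕ) := by simp [mul_comm]
    · have key : ∀ i, x i ^ d =
          ∑ ν : Fin (d + 1), (d.choose ν) * (x i - u) ^ (ν : ℕ) * u ^ (d - (ν : ℕ)) := by
        intro i
        have h1 := add_pow (x i - u) u d
        have h2 : x i - u + u = x i := by ring
        rw [h2] at h1
        rw [h1, Fin.sum_univ_eq_sum_range
          (fun k => ((d.choose k : ℤ)) * (x i - u) ^ k * u ^ (d - k))]
        exact Finset.sum_congr rfl fun k _ => by ring
      calc ∑ i, x i ^ d
          = ∑ i, ∑ ν : Fin (d + 1),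
              (d.choose ν) * (x i - u) ^ (ν : ℕ) * u ^ (d - (ν : ℕ)) :=
            Finset.sum_congr rfl fun i _ => key i
        _ = ∑ ν : Fin (d + 1), ∑ i,
              (d.choose ν) * (x i - u) ^ (ν : ℕ) * u ^ (d - (ν : ℕ)) := Finset.sum_comm
        _ = ∑ ν : Fin (d + 1),
              (d.choose ν) * (∑ i, (x i - u) ^ (ν : ℕ)) * u ^ (d - (ν : ℕ)) := by
            refine Finset.sum_congr rfl fun ν _ => ?_
            simp only [Finset.mul_sum, Finset.sum_mul]
  · set f : (Fin (d + 1) → ℤ) → ℤ :=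
      fun zv => ∑ ν : Fin (d + 1), (d.choose ν) * zv ν * u ^ (d - (ν : ℕ)) with hf
    set S : Finset (Fin (d + 1) → ℤ) :=
      Fintype.piFinset (fun ν : Fin (d + 1) => Finset.Icc 0 ((n : ℤ) * h ^ (ν : ℕ))) with hS
    have hsub : {z : ℤ | ∃ zv : Fin (d + 1) → ℤ,
          (∀ ν : Fin (d + 1), 0 ≤ zv ν ∧ zv ν ≤ n * h ^ (ν : ℕ)) ∧
          z = ∑ ν : Fin (d + 1), (d.choose ν) * zv ν * u ^ (d - (ν : ℕ))} ⊆
        ↑(S.image f) := by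
      rintro z ⟨zv, hzv, rfl⟩
      simp only [Finset.coe_image, Set.mem_image, Finset.mem_coe, hS,
        Fintype.mem_piFinset]
      exact ⟨zv, fun ν => Finset.mem_Icc.2 ⟨(hzv ν).1, (hzv ν).2⟩, rfl⟩
    have hcard1 : ({z : ℤ | ∃ zv : Fin (d + 1) → ℤ,
          (∀ ν : Fin (d + 1), 0 ≤ zv ν ∧ zv ν ≤ n * h ^ (ν : ℕ)) ∧
          z = ∑ ν : Fin (d + 1), (d.choose ν) * zv ν * u ^ (d - (ν : ℕ))}.ncard) ≤
        (S.image f).card := by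
      rw [← Set.ncard_coe_finset (S.image f)]
      exact Set.ncard_le_ncard hsub (S.image f).finite_toSet
    have hcard2 : (S.image f).card ≤ S.card := Finset.card_image_le
    have hScard : (S.card : ℤ) = ∏ ν : Fin (d + 1), ((n : ℤ) * h ^ (ν : ℕ) + 1) := by
      rw [hS, Fintype.card_piFinset]
      push_cast
      refine Finset.prod_congr rfl fun ν _ => ?_
      rw [Int.card_Icc]
      have hpos : (0 : ℤ) ≤ (n : ℤ) * h ^ (ν : ℕ) + 1 := by
        positivity
      rw [sub_zero]
      exact Int.toNat_of_nonneg hpos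
    have hpow : ∀ ν : ℕ, (1 : ℤ) ≤ h ^ ν := fun ν => one_le_pow₀ (by linarith)
    have hprod : ∏ ν : Fin (d + 1), ((n : ℤ) * h ^ (ν : ℕ) + 1) ≤
        ((n : ℤ) + 1) ^ (d + 1) * h ^ (d * (d + 1) / 2) := by
      calc ∏ ν : Fin (d + 1), ((n : ℤ) * h ^ (ν : ℕ) + 1)
          ≤ ∏ ν : Fin (d + 1), (((n : ℤ) + 1) * h ^ (ν : ℕ)) := by
            refine Finset.prod_le_prod (fun ν _ => by positivity) (fun ν _ => ?_)
            have := hpow (ν : ℕ)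
            nlinarith
        _ = ((n : ℤ) + 1) ^ (d + 1) * h ^ (∑ ν : Fin (d + 1), (ν : ℕ)) := by
            rw [Finset.prod_mul_distrib, Finset.prod_const, Finset.prod_pow_eq_pow_sum]
            simp
        _ = ((n : ℤ) + 1) ^ (d + 1) * h ^ (d * (d + 1) / 2) := by
            have hsum : (∑ ν : Fin (d + 1), (ν : ℕ)) = d * (d + 1) / 2 := by
              rw [show (∑ ν : Fin (d + 1), (ν : ℕ)) = ∑ i ∈ Finset.range (d + 1), i from
                Fin.sum_univ_eq_sum_range (fun k => k) (d + 1), Finset.sum_range_id,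
                Nat.add_sub_cancel, Nat.mul_comm]
            rw [hsum]
    have hZ : ({z : ℤ | ∃ zv : Fin (d + 1) → ℤ,
          (∀ ν : Fin (d + 1), 0 ≤ zv ν ∧ zv ν ≤ n * h ^ (ν : ℕ)) ∧
          z = ∑ ν : Fin (d + 1), (d.choose ν) * zv ν * u ^ (d - (ν : ℕ))}.ncard : ℤ) ≤
        ((n : ℤ) + 1) ^ (d + 1) * h ^ (d * (d + 1) / 2) := by
      calc (({z : ℤ | ∃ zv : Fin (d + 1) → ℤ,
          (∀ ν : Fin (d + 1), 0 ≤ zv ν ∧ zv ν ≤ n * h ^ (ν : ℕ)) ∧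
          z = ∑ ν : Fin (d + 1), (d.choose ν) * zv ν * u ^ (d - (ν : ℕ))}.ncard : ℤ))
          ≤ (S.card : ℤ) := by exact_mod_cast le_trans hcard1 hcard2
        _ = ∏ ν : Fin (d + 1), ((n : ℤ) * h ^ (ν : ℕ) + 1) := hScard
        _ ≤ _ := hprod
    have hZ' : ({z : ℤ | ∃ zv : Fin (d + 1) → ℤ,
          (∀ ν : Fin (d + 1), 0 ≤ zv ν ∧ zv ν ≤ n * h ^ (ν : ℕ)) ∧
          z = ∑ ν : Fin (d + 1), (d.choose ν) * zv ν * u ^ (d - (ν : ℕ))}.ncard : ℝ) ≤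
        ((n : ℝ) + 1) ^ (d + 1) * (h : ℝ) ^ (d * (d + 1) / 2) := by exact_mod_cast hZ
    push_cast
    linarith
end

section
/- Let q = p^r with p > max{2, r} prime and r ≥ 1, and let χ be a Dirichlet character modulo q generating the character group. Then there exists a polynomial F(Z) = ∑_{k=1}^{r-1} A_k Z^k ∈ ℤ[Z] with gcd(A_k, p) = 1 for all k, such that for all integers y, z with gcd(y, p) = 1, χ(y + pz) = χ(y)·e(F(pwz)/q), where w is the inverse of y modulo q with 1 ≤ w < q. -/
set_option maxRecDepth 8000
open Finset Complex Polynomial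

namespace PostnikovAux

variable (p r : ℕ)

/-- truncated exponential over `ZMod (p^r)` -/
noncomputable def Ep : Polynomial (ZMod (p ^ r)) :=
  ∑ n ∈ Finset.range r, C (((n.factorial : ZMod (p ^ r)))⁻¹) * X ^ n

/-- truncated logarithm of `1+X` over `ZMod (p^r)` -/
noncomputable def Lp : Polynomial (ZMod (p ^ r)) :=
  ∑ j ∈ Finset.range (r - 1), C ((-1) ^ j * (((j + 1 : ℕ) : ZMod (p ^ r)))⁻¹) * X ^ (j + 1)

variable {p r}

lemma unit_natCast (hp : p.Prime) {k : ℕ} (h1 : ¬ p ∣ k) :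
    IsUnit (k : ZMod (p ^ r)) := by
  rcases Nat.eq_zero_or_pos r with rfl | hr
  · simpa using isUnit_of_subsingleton _
  haveI : NeZero (p ^ r) := ⟨pow_ne_zero _ hp.pos.ne'⟩
  rw [ZMod.isUnit_iff_coprime]
  exact (Nat.Coprime.pow_right _ ((Nat.Prime.coprime_iff_not_dvd hp).mpr h1).symm)

lemma unit_natCast_of_lt (hp : p.Prime) {k : ℕ} (h0 : 0 < k) (h1 : k < p) :
    IsUnit (k : ZMod (p ^ r)) :=
  unit_natCast hp (fun h => absurd (Nat.le_of_dvd h0 h) (not_le.mpr h1))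

lemma unit_factorial (hp : p.Prime) {n : ℕ} (h : n < p) :
    IsUnit (n.factorial : ZMod (p ^ r)) :=
  unit_natCast hp (fun hd => absurd ((Nat.Prime.dvd_factorial hp).mp hd) (not_le.mpr h))

lemma zmod_mul_inv {n : ℕ} {a b : ZMod n} (ha : IsUnit a) (hb : IsUnit b) :
    (a * b)⁻¹ = a⁻¹ * b⁻¹ := by
  have h1 : (a * b) * ((a * b)⁻¹) = 1 := ZMod.mul_inv_of_unit _ (ha.mul hb)
  have h2 : (a * b) * (a⁻¹ * b⁻¹) = 1 := by
    rw [mul_mul_mul_comm, ZMod.mul_inv_of_unit _ ha, ZMod.mul_inv_of_unit _ hb, one_mul]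
  exact (ha.mul hb).mul_left_cancel (h1.trans h2.symm)

lemma coeff_Ep (m : ℕ) :
    (Ep p r).coeff m = if m < r then ((m.factorial : ZMod (p ^ r)))⁻¹ else 0 := by
  rw [Ep, finset_sum_coeff]
  simp only [coeff_C_mul, coeff_X_pow, mul_ite, mul_one, mul_zero]
  rw [Finset.sum_ite_eq (Finset.range r) m (fun n => ((n.factorial : ZMod (p ^ r)))⁻¹)]
  simp [Finset.mem_range]

lemma coeff_Lp_zero : (Lp p r).coeff 0 = 0 := by
  rw [Lp, finset_sum_coeff]
  refine Finset.sum_eq_zero fun j _ => ?_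
  simp [coeff_C_mul, coeff_X_pow]

lemma X_dvd_Lp : (X : Polynomial (ZMod (p ^ r))) ∣ Lp p r :=
  X_dvd_iff.mpr coeff_Lp_zero

end PostnikovAux

namespace PostnikovAux
variable {p r : ℕ}

lemma dLp (hp : p.Prime) (hrp : r < p) :
    derivative (Lp p r) = ∑ j ∈ Finset.range (r - 1), (-X : Polynomial (ZMod (p ^ r))) ^ j := by
  rw [Lp, derivative_sum]
  refine Finset.sum_congr rfl fun j hj => ?_
  rw [derivative_C_mul_X_pow]
  have hu : IsUnit ((j + 1 : ℕ) : ZMod (p ^ r)) := by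
    refine unit_natCast_of_lt hp (Nat.succ_pos j) ?_
    have := Finset.mem_range.mp hj
    omega
  rw [mul_assoc, ZMod.inv_mul_of_unit _ hu, mul_one, Nat.add_sub_cancel,
    map_pow, map_neg, map_one, ← mul_pow, neg_one_mul]

lemma dEp (hp : p.Prime) (hr : 1 ≤ r) (hrp : r < p) :
    derivative (Ep p r) =
      Ep p r - C ((((r - 1).factorial : ZMod (p ^ r)))⁻¹) * X ^ (r - 1) := by
  obtain ⟨r', rfl⟩ : ∃ r', r = r' + 1 := ⟨r - 1, by omega⟩
  ext m
  rw [coeff_derivative, coeff_Ep]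
  have hrr : (r' + 1) - 1 = r' := by omega
  rw [coeff_sub, coeff_Ep, coeff_C_mul, coeff_X_pow, hrr]
  by_cases h1 : m + 1 < r' + 1
  · have h2 : m < r' + 1 := by omega
    have h3 : m ≠ r' := by omega
    simp only [if_pos h1, if_pos h2, if_neg h3, mul_zero, sub_zero]
    have hu1 : IsUnit ((m + 1 : ℕ) : ZMod (p ^ (r' + 1))) :=
      unit_natCast_of_lt hp (Nat.succ_pos m) (by omega)
    have hu2 : IsUnit ((m.factorial : ℕ) : ZMod (p ^ (r' + 1))) :=
      unit_factorial hp (by have := Nat.self_le_factorial m; omega)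
    have hfac : ((m + 1).factorial : ZMod (p ^ (r' + 1)))
        = ((m + 1 : ℕ) : ZMod (p ^ (r' + 1))) * (m.factorial : ZMod (p ^ (r' + 1))) := by
      rw [Nat.factorial_succ]; push_cast; ring
    rw [hfac, zmod_mul_inv hu1 hu2, mul_comm ((((m + 1 : ℕ) : ZMod (p ^ (r' + 1))))⁻¹) _,
      mul_assoc, ← Nat.cast_add_one, ZMod.inv_mul_of_unit _ hu1, mul_one]
  · have h2 : ¬ (m < r' + 1) ∨ m = r' := by omega
    simp only [if_neg h1, zero_mul]
    rcases h2 with h2 | h2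
    · rw [if_neg h2, if_neg (show m ≠ r' by omega)]
      simp
    · rw [h2, if_pos (by omega : r' < r' + 1), if_pos rfl]
      simp

lemma geom_aux :
    (1 + X) * ∑ j ∈ Finset.range (r - 1), (-X : Polynomial (ZMod (p ^ r))) ^ j
      = 1 - (-X) ^ (r - 1) := by
  have h := geom_sum_mul (-X : Polynomial (ZMod (p ^ r))) (r - 1)
  linear_combination -h

lemma keyODE (hp : p.Prime) (hr : 1 ≤ r) (hrp : r < p) :
    (1 + X) * derivative ((Ep p r).comp (Lp p r)) =
      (1 - (-X) ^ (r - 1)) *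
        ((Ep p r).comp (Lp p r) - C ((((r - 1).factorial : ZMod (p ^ r)))⁻¹) * (Lp p r) ^ (r - 1)) := by
  rw [derivative_comp, dEp hp hr hrp, sub_comp, mul_comp, C_comp, X_pow_comp, dLp hp hrp]
  have hg := @geom_aux p r
  linear_combination ((Ep p r).comp (Lp p r) -
    C ((((r - 1).factorial : ZMod (p ^ r)))⁻¹) * (Lp p r) ^ (r - 1)) * hg

lemma coeff_pow_lt {m : ℕ} (hm : m < r - 1)
    (q : Polynomial (ZMod (p ^ r))) (hq : X ^ (r-1) ∣ q) : q.coeff m = 0 := by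
  obtain ⟨w, rfl⟩ := hq
  rw [mul_comm, coeff_mul_X_pow']
  simp [Nat.not_le.mpr hm]

lemma coeff_rec (hp : p.Prime) (hr : 1 ≤ r) (hrp : r < p) {m : ℕ} (hm : m < r - 1) :
    ((m + 1 : ℕ) : ZMod (p ^ r)) * ((Ep p r).comp (Lp p r)).coeff (m + 1)
      + (m : ZMod (p ^ r)) * ((Ep p r).comp (Lp p r)).coeff m
      = ((Ep p r).comp (Lp p r)).coeff m := by
  set G := (Ep p r).comp (Lp p r) with hG
  set c := (((r - 1).factorial : ZMod (p ^ r)))⁻¹ with hc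
  have h := congrArg (fun q => Polynomial.coeff q m) (keyODE hp hr hrp)
  -- LHS coefficient
  have hL : ((1 + X) * derivative G).coeff m
      = ((m + 1 : ℕ) : ZMod (p ^ r)) * G.coeff (m + 1) + (m : ZMod (p ^ r)) * G.coeff m := by
    rw [add_mul, one_mul, coeff_add, coeff_derivative]
    rcases Nat.eq_zero_or_pos m with rfl | hm0
    · simp [mul_comm]
    · obtain ⟨j, rfl⟩ : ∃ j, m = j + 1 := ⟨m - 1, by omega⟩
      rw [coeff_X_mul, coeff_derivative]
      push_cast
      ring
  -- RHS coefficient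
  have hR : ((1 - (-X) ^ (r - 1)) * (G - C c * (Lp p r) ^ (r - 1))).coeff m = G.coeff m := by
    have hdvd : (X : Polynomial (ZMod (p ^ r))) ^ (r - 1) ∣
        (-X) ^ (r - 1) * (G - C c * (Lp p r) ^ (r - 1)) := by
      exact Dvd.dvd.mul_right ⟨(-1 : Polynomial (ZMod (p^r)))^(r-1), by rw [neg_pow]; ring⟩ _
    have h2 : (C c * (Lp p r) ^ (r - 1)).coeff m = 0 := by
      refine coeff_pow_lt hm _ ?_
      exact Dvd.dvd.mul_left (pow_dvd_pow_of_dvd X_dvd_Lp _) _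
    rw [sub_mul, one_mul, coeff_sub, coeff_sub, h2, sub_zero,
      coeff_pow_lt hm _ hdvd, sub_zero]
  rw [hL, hR] at h
  exact h

lemma zmod_inv_one {n : ℕ} : (1 : ZMod n)⁻¹ = 1 := by
  have := ZMod.mul_inv_of_unit (1 : ZMod n) isUnit_one
  simpa using this

lemma eval_Ep (t : ZMod (p ^ r)) :
    (Ep p r).eval t = ∑ n ∈ Finset.range r, ((n.factorial : ZMod (p ^ r)))⁻¹ * t ^ n := by
  simp [Ep, eval_finset_sum]

lemma eval_Lp (t : ZMod (p ^ r)) :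
    (Lp p r).eval t = ∑ j ∈ Finset.range (r - 1),
      (-1) ^ j * (((j + 1 : ℕ) : ZMod (p ^ r)))⁻¹ * t ^ (j + 1) := by
  simp [Lp, eval_finset_sum]

lemma Ep_eval_zero (hr : 1 ≤ r) : (Ep p r).eval 0 = 1 := by
  rw [eval_Ep, Finset.sum_eq_single 0]
  · simp [Nat.factorial, zmod_inv_one]
  · intro b _ hb
    simp [zero_pow hb]
  · intro h
    exact absurd (Finset.mem_range.mpr (by omega)) h

lemma Lp_eval_zero : (Lp p r).eval 0 = 0 := by
  rw [eval_Lp]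
  exact Finset.sum_eq_zero fun j _ => by simp

lemma gcoeff_zero (hr : 1 ≤ r) : ((Ep p r).comp (Lp p r)).coeff 0 = 1 := by
  rw [coeff_zero_eq_eval_zero, eval_comp, Lp_eval_zero, Ep_eval_zero hr]

lemma coeff_one_add_X {R : Type*} [Semiring R] (m : ℕ) :
    ((1 : Polynomial R) + X).coeff m = if m ≤ 1 then 1 else 0 := by
  rcases m with _ | _ | m <;> simp [coeff_one, coeff_X]

lemma gcoeff (hp : p.Prime) (hr2 : 2 ≤ r) (hrp : r < p) :
    ∀ m, m < r → ((Ep p r).comp (Lp p r)).coeff m = ((1 : Polynomial (ZMod (p ^ r))) + X).coeff m := by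
  intro m
  induction m using Nat.strong_induction_on with
  | _ m ih =>
    intro hm
    match m with
    | 0 => rw [gcoeff_zero (by omega), coeff_one_add_X]; simp
    | 1 =>
      have h := coeff_rec hp (by omega) hrp (show 0 < r - 1 by omega)
      rw [gcoeff_zero (by omega)] at h
      simp only [Nat.cast_one, Nat.cast_zero, zero_mul, add_zero, Nat.cast_ofNat] at h
      rw [coeff_one_add_X]
      simpa using h
    | (j + 2) =>
      have h := coeff_rec hp (by omega) hrp (show j + 1 < r - 1 by omega)
      have hprev := ih (j + 1) (by omega) (by omega)
      rw [hprev, coeff_one_add_X] at h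
      have h0 : ((j + 2 : ℕ) : ZMod (p ^ r)) * ((Ep p r).comp (Lp p r)).coeff (j + 2) = 0 := by
        rcases Nat.eq_zero_or_pos j with rfl | hj
        · simp only [show (0:ℕ) + 1 ≤ 1 from le_refl 1, if_pos] at h
          push_cast at h ⊢
          linear_combination h
        · rw [if_neg (by omega)] at h
          push_cast at h ⊢
          linear_combination h
      have hu : IsUnit ((j + 2 : ℕ) : ZMod (p ^ r)) :=
        unit_natCast_of_lt hp (by omega) (by omega)
      have h00 : ((j + 2 : ℕ) : ZMod (p ^ r)) * ((Ep p r).comp (Lp p r)).coeff (j + 2)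
          = ((j + 2 : ℕ) : ZMod (p ^ r)) * 0 := by rw [mul_zero]; exact h0
      have := hu.mul_left_cancel h00
      rw [this, coeff_one_add_X, if_neg (by omega)]

lemma comp_eval (hp : p.Prime) (hr2 : 2 ≤ r) (hrp : r < p) (u : ZMod (p ^ r)) :
    (Ep p r).eval ((Lp p r).eval ((p : ZMod (p ^ r)) * u)) = 1 + (p : ZMod (p ^ r)) * u := by
  have hp0 : ((p : ZMod (p ^ r))) ^ r = 0 := by
    rw [← Nat.cast_pow, ZMod.natCast_self]
  set t := (p : ZMod (p ^ r)) * u with hts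
  have ht : ∀ m, r ≤ m → t ^ m = 0 := by
    intro m hm
    rw [hts, mul_pow, show m = r + (m - r) by omega, pow_add, hp0, zero_mul, zero_mul]
  rw [← eval_comp]
  set G := (Ep p r).comp (Lp p r) with hG
  have hdeg : G.natDegree < max r (G.natDegree + 1) :=
    lt_of_lt_of_le (Nat.lt_succ_self _) (le_max_right _ _)
  rw [Polynomial.eval_eq_sum_range' hdeg]
  have hsub : Finset.range r ⊆ Finset.range (max r (G.natDegree + 1)) :=
    Finset.range_subset_range.mpr (le_max_left _ _)
  have hzero : ∀ x ∈ Finset.range (max r (G.natDegree + 1)), x ∉ Finset.range r →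
      G.coeff x * t ^ x = 0 := fun x _ hnx => by
    rw [ht x (by simpa using hnx), mul_zero]
  rw [← Finset.sum_subset hsub hzero]
  rw [Finset.sum_congr rfl (fun i hi => by
    rw [gcoeff hp hr2 hrp i (Finset.mem_range.mp hi)])]
  have hdeg1 : ((1 : Polynomial (ZMod (p ^ r))) + X).natDegree < r := by
    have h1 : ((1 : Polynomial (ZMod (p ^ r))) + X).natDegree ≤ 1 :=
      (natDegree_add_le _ _).trans (by simp [natDegree_X_le])
    omega
  rw [← Polynomial.eval_eq_sum_range' hdeg1]
  simp

lemma fact_inv_choose (hp : p.Prime) (hrp : r < p) {n i : ℕ} (hn : n < r) (hi : i ≤ n) :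
    ((n.factorial : ZMod (p ^ r)))⁻¹ * ((n.choose i : ℕ) : ZMod (p ^ r))
      = ((i.factorial : ZMod (p ^ r)))⁻¹ * (((n - i).factorial : ZMod (p ^ r)))⁻¹ := by
  have hun : IsUnit ((n.factorial : ℕ) : ZMod (p ^ r)) := unit_factorial hp (by omega)
  have hui : IsUnit ((i.factorial : ℕ) : ZMod (p ^ r)) := unit_factorial hp (by omega)
  have huni : IsUnit (((n - i).factorial : ℕ) : ZMod (p ^ r)) := unit_factorial hp (by omega)
  have hcast : ((n.choose i : ℕ) : ZMod (p ^ r)) * (i.factorial : ZMod (p ^ r))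
      * ((n - i).factorial : ZMod (p ^ r)) = (n.factorial : ZMod (p ^ r)) := by
    rw [← Nat.cast_mul, ← Nat.cast_mul, Nat.choose_mul_factorial_mul_factorial hi]
  have h1 : ((i.factorial : ZMod (p ^ r)) * ((n - i).factorial : ZMod (p ^ r)))
      * (((n.factorial : ZMod (p ^ r)))⁻¹ * ((n.choose i : ℕ) : ZMod (p ^ r))) = 1 := by
    have hre : ((i.factorial : ZMod (p ^ r)) * ((n - i).factorial : ZMod (p ^ r)))
        * (((n.factorial : ZMod (p ^ r)))⁻¹ * ((n.choose i : ℕ) : ZMod (p ^ r)))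
        = ((n.factorial : ZMod (p ^ r)))⁻¹ * (((n.choose i : ℕ) : ZMod (p ^ r))
            * (i.factorial : ZMod (p ^ r)) * ((n - i).factorial : ZMod (p ^ r))) := by ring
    rw [hre, hcast, ZMod.inv_mul_of_unit _ hun]
  have h2 : ((i.factorial : ZMod (p ^ r)) * ((n - i).factorial : ZMod (p ^ r)))
      * (((i.factorial : ZMod (p ^ r)))⁻¹ * (((n - i).factorial : ZMod (p ^ r)))⁻¹) = 1 := by
    rw [mul_mul_mul_comm, ZMod.mul_inv_of_unit _ hui, ZMod.mul_inv_of_unit _ huni, one_mul]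
  exact (hui.mul huni).mul_left_cancel (h1.trans h2.symm)

lemma Ep_hom (hp : p.Prime) (hrp : r < p) (a b : ZMod (p ^ r)) :
    (Ep p r).eval ((p : ZMod (p ^ r)) * a + (p : ZMod (p ^ r)) * b)
      = (Ep p r).eval ((p : ZMod (p ^ r)) * a) * (Ep p r).eval ((p : ZMod (p ^ r)) * b) := by
  set x := (p : ZMod (p ^ r)) * a with hxs
  set y := (p : ZMod (p ^ r)) * b with hys
  have hp0 : ((p : ZMod (p ^ r))) ^ r = 0 := by rw [← Nat.cast_pow, ZMod.natCast_self]
  have hxy : ∀ i j : ℕ, r ≤ i + j → x ^ i * y ^ j = 0 := by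
    intro i j h
    have hre : x ^ i * y ^ j = (p : ZMod (p ^ r)) ^ (i + j) * (a ^ i * b ^ j) := by
      rw [hxs, hys, mul_pow, mul_pow, pow_add]; ring
    rw [hre, show i + j = r + (i + j - r) by omega, pow_add, hp0, zero_mul, zero_mul]
  have hstep : ∀ i j : ℕ, r ≤ i + j →
      ((i.factorial : ZMod (p ^ r))⁻¹ * x ^ i) * ((j.factorial : ZMod (p ^ r))⁻¹ * y ^ j) = 0 := by
    intro i j h
    have hre : ((i.factorial : ZMod (p ^ r))⁻¹ * x ^ i) * ((j.factorial : ZMod (p ^ r))⁻¹ * y ^ j)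
        = (i.factorial : ZMod (p ^ r))⁻¹ * (j.factorial : ZMod (p ^ r))⁻¹ * (x ^ i * y ^ j) := by
      ring
    rw [hre, hxy i j h, mul_zero]
  rw [eval_Ep, eval_Ep, eval_Ep, Finset.sum_mul_sum]
  set F : ℕ × ℕ → ZMod (p ^ r) := fun q =>
    ((q.1.factorial : ZMod (p ^ r))⁻¹ * x ^ q.1) * ((q.2.factorial : ZMod (p ^ r))⁻¹ * y ^ q.2)
    with hF
  have hsq : ∑ i ∈ Finset.range r, ∑ j ∈ Finset.range r,
      ((i.factorial : ZMod (p ^ r))⁻¹ * x ^ i) * ((j.factorial : ZMod (p ^ r))⁻¹ * y ^ j)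
      = ∑ n ∈ Finset.range r, ∑ i ∈ Finset.range (n + 1), F (i, n - i) := by
    have h1 : ∑ i ∈ Finset.range r, ∑ j ∈ Finset.range r,
        ((i.factorial : ZMod (p ^ r))⁻¹ * x ^ i) * ((j.factorial : ZMod (p ^ r))⁻¹ * y ^ j)
        = ∑ q ∈ Finset.range r ×ˢ Finset.range r, F q := by
      rw [Finset.sum_product]
    have hBsub : ((Finset.range r).biUnion (fun n => Finset.HasAntidiagonal.antidiagonal n))
        ⊆ Finset.range r ×ˢ Finset.range r := by
      intro q hq
      rw [Finset.mem_biUnion] at hq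
      obtain ⟨n, hn, hq⟩ := hq
      rw [Finset.HasAntidiagonal.mem_antidiagonal] at hq
      have hn' := Finset.mem_range.mp hn
      rw [Finset.mem_product, Finset.mem_range, Finset.mem_range]
      omega
    have hvan : ∀ q ∈ Finset.range r ×ˢ Finset.range r,
        q ∉ (Finset.range r).biUnion (fun n => Finset.HasAntidiagonal.antidiagonal n) → F q = 0 := by
      intro q _ hnq
      have hle : r ≤ q.1 + q.2 := by
        by_contra hcon
        exact hnq (Finset.mem_biUnion.mpr ⟨q.1 + q.2, Finset.mem_range.mpr (by omega),
          Finset.HasAntidiagonal.mem_antidiagonal.mpr rfl⟩)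
      exact hstep q.1 q.2 hle
    have hdisj : Set.PairwiseDisjoint ((Finset.range r : Finset ℕ) : Set ℕ)
        (fun n => (Finset.HasAntidiagonal.antidiagonal n : Finset (ℕ × ℕ))) := by
      intro m _ n _ hmn
      rw [Function.onFun, Finset.disjoint_left]
      intro q hqm hqn
      rw [Finset.HasAntidiagonal.mem_antidiagonal] at hqm hqn
      omega
    rw [h1, ← Finset.sum_subset hBsub hvan, Finset.sum_biUnion hdisj]
    refine Finset.sum_congr rfl fun n _ => ?_
    exact Finset.Nat.sum_antidiagonal_eq_sum_range_succ_mk F n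
  rw [hsq]
  refine Finset.sum_congr rfl fun n hn => ?_
  rw [add_pow, Finset.mul_sum]
  refine Finset.sum_congr rfl fun i hi => ?_
  have hin : i ≤ n := by have := Finset.mem_range.mp hi; omega
  have h := fact_inv_choose hp hrp (Finset.mem_range.mp hn) hin
  have hre : (n.factorial : ZMod (p ^ r))⁻¹ * (x ^ i * y ^ (n - i) * ((n.choose i : ℕ) : ZMod (p ^ r)))
      = ((n.factorial : ZMod (p ^ r))⁻¹ * ((n.choose i : ℕ) : ZMod (p ^ r))) * (x ^ i * y ^ (n - i)) := by
    ring
  rw [hre, h, hF]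
  ring

lemma Ep_eval_prm1 (hp : p.Prime) (hr2 : 2 ≤ r) :
    (Ep p r).eval ((p : ZMod (p ^ r)) * ((p ^ (r - 2) : ℕ) : ZMod (p ^ r)))
      = 1 + ((p ^ (r - 1) : ℕ) : ZMod (p ^ r)) := by
  have hp0 : ((p : ZMod (p ^ r))) ^ r = 0 := by rw [← Nat.cast_pow, ZMod.natCast_self]
  have ht : (p : ZMod (p ^ r)) * ((p ^ (r - 2) : ℕ) : ZMod (p ^ r))
      = ((p ^ (r - 1) : ℕ) : ZMod (p ^ r)) := by
    rw [Nat.cast_pow, Nat.cast_pow, show r - 1 = (r - 2) + 1 by omega, pow_succ]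
    ring
  have ht2 : (((p ^ (r - 1) : ℕ) : ZMod (p ^ r))) ^ 2 = 0 := by
    rw [Nat.cast_pow, ← pow_mul, show (r - 1) * 2 = r + (r - 2) by omega, pow_add, hp0, zero_mul]
  rw [ht, eval_Ep]
  have hsub : Finset.range 2 ⊆ Finset.range r := Finset.range_subset_range.mpr hr2
  have hvan : ∀ n ∈ Finset.range r, n ∉ Finset.range 2 →
      ((n.factorial : ZMod (p ^ r)))⁻¹ * (((p ^ (r - 1) : ℕ) : ZMod (p ^ r))) ^ n = 0 := by
    intro n _ hn2
    have h2n : 2 ≤ n := by simp at hn2; omega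
    rw [show n = 2 + (n - 2) by omega, pow_add, ht2, zero_mul, mul_zero]
  rw [← Finset.sum_subset hsub hvan]
  rw [Finset.sum_range_succ, Finset.sum_range_succ, Finset.sum_range_zero]
  simp [Nat.factorial, zmod_inv_one]

end PostnikovAux

open PostnikovAux

/-- Postnikov's formula: if `χ` generates the character group modulo `p^r`
(`p > max{2,r}` prime), there is a polynomial `F(Z) = ∑_{k=1}^{r-1} A_k Z^k`
with `gcd(A_k, p) = 1` such that `χ(y + pz) = χ(y) e(F(pwz)/p^r)` whenever
`gcd(y,p) = 1` and `w` is the inverse of `y` modulo `p^r` with `1 ≤ w < p^r`. -/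
theorem postnikov_formula (p r : ℕ) (hp : p.Prime) (hr : 1 ≤ r)
    (hpr : max 2 r < p)
    (χ : DirichletCharacter ℂ (p ^ r))
    (hgen : ∀ ψ : DirichletCharacter ℂ (p ^ r), ∃ m : ℕ, ψ = χ ^ m) :
    ∃ A : ℕ → ℤ, (∀ k ∈ Finset.Icc 1 (r - 1), Int.gcd (A k) p = 1) ∧
      ∀ y z w : ℤ, Int.gcd y p = 1 →
        (y * w) % (p ^ r : ℕ) = 1 % (p ^ r : ℕ) → 1 ≤ w → w < (p ^ r : ℕ) →
        χ ((y + p * z : ℤ) : ZMod (p ^ r)) =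
          χ ((y : ℤ) : ZMod (p ^ r)) *
            Complex.exp (2 * Real.pi * Complex.I *
              ((∑ k ∈ Finset.Icc 1 (r - 1), A k * (p * w * z) ^ k : ℤ) : ℂ) /
                ((p ^ r : ℕ) : ℂ)) := by
  have hrp : r < p := lt_of_le_of_lt (le_max_right 2 r) hpr
  have hp2 : 2 < p := lt_of_le_of_lt (le_max_left 2 r) hpr
  rcases eq_or_lt_of_le hr with hr1 | hr2'
  · -- case r = 1
    subst hr1
    refine ⟨fun _ => 1, ?_, ?_⟩
    · intro k hk
      simp at hk
    · intro y z w hy hyw hw1 hw2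
      have h0 : ((p : ℕ) : ZMod (p ^ 1)) = 0 := by
        rw [show ((p : ℕ) : ZMod (p ^ 1)) = ((p ^ 1 : ℕ) : ZMod (p ^ 1)) by norm_num]
        exact ZMod.natCast_self _
      have hcast : ((y + (p : ℤ) * z : ℤ) : ZMod (p ^ 1)) = ((y : ℤ) : ZMod (p ^ 1)) := by
        push_cast
        rw [h0]
        ring
      have hempty : Finset.Icc 1 (1 - 1) = (∅ : Finset ℕ) := by simp
      rw [hcast, hempty]
      simp
  -- case 2 ≤ r
  have hr2 : 2 ≤ r := hr2'
  haveI : NeZero (p ^ r) := ⟨pow_ne_zero _ hp.pos.ne'⟩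
  haveI : NeZero (p ^ (r - 1)) := ⟨pow_ne_zero _ hp.pos.ne'⟩
  set η := χ ((Ep p r).eval ((p : ZMod (p ^ r)) * 1)) with hη
  have hgpow : ∀ n : ℕ,
      χ ((Ep p r).eval ((p : ZMod (p ^ r)) * ((n : ℕ) : ZMod (p ^ r)))) = η ^ n := by
    intro n
    induction n with
    | zero => rw [Nat.cast_zero, mul_zero, Ep_eval_zero (by omega), map_one, pow_zero]
    | succ n ih =>
      have hsplit : (p : ZMod (p ^ r)) * ((n + 1 : ℕ) : ZMod (p ^ r))
          = (p : ZMod (p ^ r)) * ((n : ℕ) : ZMod (p ^ r)) + (p : ZMod (p ^ r)) * 1 := by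
        push_cast
        ring
      rw [hsplit, Ep_hom hp hrp, map_mul, ih, ← hη, pow_succ]
  have hηord : η ^ (p ^ (r - 1)) = 1 := by
    rw [← hgpow (p ^ (r - 1))]
    have h1 : (p : ZMod (p ^ r)) * ((p ^ (r - 1) : ℕ) : ZMod (p ^ r)) = 0 := by
      rw [Nat.cast_pow, ← pow_succ', show r - 1 + 1 = r by omega, ← Nat.cast_pow,
        ZMod.natCast_self]
    rw [h1, Ep_eval_zero (by omega), map_one]
  have hζ := Complex.isPrimitiveRoot_exp (p ^ (r - 1)) (pow_ne_zero _ hp.pos.ne')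
  obtain ⟨c₀, hc₀lt, hc₀⟩ := hζ.eq_pow_of_pow_eq_one hηord
  -- the element 1 + p^(r-1)
  have hπ : ((p ^ (r - 1) : ℕ) : ZMod (p ^ r)) ≠ 0 := by
    rw [Ne, ZMod.natCast_eq_zero_iff]
    intro hdvd
    have hle := Nat.le_of_dvd (pow_pos hp.pos _) hdvd
    exact absurd hle (not_le.mpr (Nat.pow_lt_pow_right hp.one_lt (by omega)))
  have hsq0 : (((p ^ (r - 1) : ℕ) : ZMod (p ^ r))) ^ 2 = 0 := by
    have hp0 : ((p : ZMod (p ^ r))) ^ r = 0 := by rw [← Nat.cast_pow, ZMod.natCast_self]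
    rw [Nat.cast_pow, ← pow_mul, show (r - 1) * 2 = r + (r - 2) by omega, pow_add, hp0, zero_mul]
  have hane : (1 + ((p ^ (r - 1) : ℕ) : ZMod (p ^ r))) ≠ 1 := by
    intro h
    apply hπ
    have := congrArg (fun t => t - 1) h
    simpa using this
  have hunit : IsUnit (1 + ((p ^ (r - 1) : ℕ) : ZMod (p ^ r))) := by
    refine IsUnit.of_mul_eq_one (1 - ((p ^ (r - 1) : ℕ) : ZMod (p ^ r))) ?_
    have : (1 + ((p ^ (r - 1) : ℕ) : ZMod (p ^ r))) * (1 - ((p ^ (r - 1) : ℕ) : ZMod (p ^ r)))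
        = 1 - (((p ^ (r - 1) : ℕ) : ZMod (p ^ r))) ^ 2 := by ring
    rw [this, hsq0, sub_zero]
  have hsep : χ (1 + ((p ^ (r - 1) : ℕ) : ZMod (p ^ r))) ≠ 1 := by
    intro hχa
    obtain ⟨ψ, hψ⟩ :=
      DirichletCharacter.exists_apply_ne_one_of_hasEnoughRootsOfUnity (R := ℂ) (n := p ^ r) hane
    obtain ⟨m, rfl⟩ := hgen ψ
    apply hψ
    rcases Nat.eq_zero_or_pos m with rfl | hm
    · rw [pow_zero]
      exact MulChar.one_apply hunit
    · rw [MulChar.pow_apply' _ (by omega), hχa, one_pow]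
  have hχa_val : χ (1 + ((p ^ (r - 1) : ℕ) : ZMod (p ^ r)))
      = (Complex.exp (2 * Real.pi * Complex.I / ((p ^ (r - 1) : ℕ) : ℂ))) ^ (c₀ * p ^ (r - 2)) := by
    rw [← Ep_eval_prm1 hp hr2, hgpow (p ^ (r - 2)), ← hc₀, ← pow_mul]
  have hpc₀ : ¬ (p ∣ c₀) := by
    rintro ⟨d, rfl⟩
    apply hsep
    rw [hχa_val, show p * d * p ^ (r - 2) = p ^ (r - 1) * d by
      rw [show r - 1 = (r - 2) + 1 by omega, pow_succ]; ring, pow_mul, hζ.pow_eq_one, one_pow]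
  set kinv : ℕ → ℕ := fun k => (((k : ℕ) : ZMod (p ^ r))⁻¹).val with hkinv
  refine ⟨fun k => (c₀ : ℤ) * (-1) ^ (k + 1) * (kinv k : ℤ), ?_, ?_⟩
  · -- coprimality of coefficients
    intro k hk
    rw [Finset.mem_Icc] at hk
    have hku : IsUnit ((k : ℕ) : ZMod (p ^ r)) := unit_natCast_of_lt hp (by omega) (by omega)
    have hkinv_cast : ((kinv k : ℕ) : ZMod (p ^ r)) = ((k : ℕ) : ZMod (p ^ r))⁻¹ :=
      ZMod.natCast_rightInverse _
    have hmul : ((k : ℕ) : ZMod (p ^ r)) * ((kinv k : ℕ) : ZMod (p ^ r)) = 1 := by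
      rw [hkinv_cast]
      exact ZMod.mul_inv_of_unit _ hku
    have hpk : ¬ p ∣ kinv k := by
      intro hdvd
      have h1 : (k * kinv k) ≡ 1 [MOD p ^ r] := by
        rw [← ZMod.natCast_eq_natCast_iff]
        push_cast
        rw [hmul]
      have h2 : (k * kinv k) ≡ 1 [MOD p] := h1.of_dvd (dvd_pow_self p (by omega))
      have h3 : p ∣ k * kinv k := hdvd.mul_left k
      have h4 : (0 : ℕ) ≡ 1 [MOD p] := (Nat.modEq_zero_iff_dvd.mpr h3).symm.trans h2
      rw [Nat.ModEq, Nat.zero_mod, Nat.mod_eq_of_lt (show 1 < p by omega)] at h4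
      omega
    have habs : (((c₀ : ℤ) * (-1) ^ (k + 1) * (kinv k : ℤ))).natAbs = c₀ * kinv k := by
      rw [Int.natAbs_mul, Int.natAbs_mul, Int.natAbs_pow]
      simp
    have hgcd : Int.gcd ((c₀ : ℤ) * (-1) ^ (k + 1) * (kinv k : ℤ)) (p : ℤ)
        = Nat.gcd (c₀ * kinv k) p := by
      rw [Int.gcd, habs, Int.natAbs_natCast]
    rw [hgcd]
    exact Nat.Coprime.mul (Nat.coprime_comm.mp (hp.coprime_iff_not_dvd.mpr hpc₀))
      (Nat.coprime_comm.mp (hp.coprime_iff_not_dvd.mpr hpk))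
  · -- the main identity
    intro y z w hy hyw hw1 hw2
    have hywR : ((y : ℤ) : ZMod (p ^ r)) * ((w : ℤ) : ZMod (p ^ r)) = 1 := by
      have h := (ZMod.intCast_eq_intCast_iff (y * w) 1 (p ^ r)).mpr hyw
      push_cast at h
      exact h
    have hfact : ((y + (p : ℤ) * z : ℤ) : ZMod (p ^ r))
        = ((y : ℤ) : ZMod (p ^ r)) * ((1 + (p : ℤ) * (w * z) : ℤ) : ZMod (p ^ r)) := by
      push_cast
      linear_combination (-(p : ZMod (p ^ r)) * ((z : ℤ) : ZMod (p ^ r))) * hywR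
    rw [hfact, map_mul]
    congr 1
    have hcast1 : ((1 + (p : ℤ) * (w * z) : ℤ) : ZMod (p ^ r))
        = 1 + (p : ZMod (p ^ r)) * (((w * z : ℤ)) : ZMod (p ^ r)) := by
      push_cast
      ring
    obtain ⟨s, hs⟩ : ∃ s : ZMod (p ^ r),
        (Lp p r).eval ((p : ZMod (p ^ r)) * (((w * z : ℤ)) : ZMod (p ^ r)))
          = (p : ZMod (p ^ r)) * s := by
      refine ⟨∑ j ∈ Finset.range (r - 1), (-1) ^ j * (((j + 1 : ℕ) : ZMod (p ^ r)))⁻¹ *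
        ((((w * z : ℤ)) : ZMod (p ^ r)) *
          ((p : ZMod (p ^ r)) * (((w * z : ℤ)) : ZMod (p ^ r))) ^ j), ?_⟩
      rw [eval_Lp, Finset.mul_sum]
      refine Finset.sum_congr rfl fun j hj => ?_
      rw [pow_succ']
      ring
    have hχ1pu : χ (((1 + (p : ℤ) * (w * z) : ℤ) : ZMod (p ^ r)))
        = (Complex.exp (2 * Real.pi * Complex.I / ((p ^ (r - 1) : ℕ) : ℂ))) ^ (c₀ * s.val) := by
      have hsv : ((s.val : ℕ) : ZMod (p ^ r)) = s := ZMod.natCast_rightInverse s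
      rw [hcast1, ← comp_eval hp hr2 hrp (((w * z : ℤ)) : ZMod (p ^ r)), hs]
      conv_lhs => rw [← hsv]
      rw [hgpow s.val, ← hc₀, ← pow_mul]
    have hIcc : Finset.Icc 1 (r - 1) = Finset.Ico 1 r := by
      rw [← Finset.Ico_add_one_right_eq_Icc]
      congr 1
      omega
    have hsum : ∑ k ∈ Finset.Icc 1 (r - 1), (c₀ : ZMod (p ^ r)) * ((-1) ^ (k + 1))
          * ((kinv k : ℕ) : ZMod (p ^ r))
          * (((p : ZMod (p ^ r)) * ((w : ℤ) : ZMod (p ^ r)) * ((z : ℤ) : ZMod (p ^ r)))) ^ k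
        = (c₀ : ZMod (p ^ r))
          * ((Lp p r).eval ((p : ZMod (p ^ r)) * (((w * z : ℤ)) : ZMod (p ^ r)))) := by
      rw [eval_Lp, Finset.mul_sum, hIcc, Finset.sum_Ico_eq_sum_range]
      refine Finset.sum_congr rfl fun j hj => ?_
      have hjr : j < r - 1 := by simpa using hj
      have hku : IsUnit (((1 + j : ℕ)) : ZMod (p ^ r)) :=
        unit_natCast_of_lt hp (by omega) (by omega)
      have hkinvc : ((kinv (1 + j) : ℕ) : ZMod (p ^ r)) = (((1 + j : ℕ)) : ZMod (p ^ r))⁻¹ :=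
        ZMod.natCast_rightInverse _
      have hwz : (((w * z : ℤ)) : ZMod (p ^ r)) = ((w : ℤ) : ZMod (p ^ r)) * ((z : ℤ) : ZMod (p ^ r)) := by
        push_cast
        ring
      rw [hkinvc, hwz, show (1 + j) + 1 = j + 2 by omega, show j + 1 = 1 + j by omega]
      ring
    have hFcast : ((∑ k ∈ Finset.Icc 1 (r - 1),
          (c₀ : ℤ) * (-1) ^ (k + 1) * (kinv k : ℤ) * ((p : ℤ) * w * z) ^ k : ℤ) : ZMod (p ^ r))
        = (((p : ℤ) * (c₀ : ℤ) * ((s.val : ℕ) : ℤ) : ℤ) : ZMod (p ^ r)) := by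
      push_cast
      rw [hsum, hs, ZMod.natCast_rightInverse s]
      ring
    have hmodeq := (ZMod.intCast_eq_intCast_iff _ _ _).mp hFcast
    obtain ⟨d, hd⟩ := hmodeq.dvd
    have hFint : (∑ k ∈ Finset.Icc 1 (r - 1),
          (c₀ : ℤ) * (-1) ^ (k + 1) * (kinv k : ℤ) * ((p : ℤ) * w * z) ^ k : ℤ)
        = (p : ℤ) * (c₀ : ℤ) * ((s.val : ℕ) : ℤ) - ((p ^ r : ℕ) : ℤ) * d := by
      linarith [hd]
    rw [hχ1pu]
    have hp1 : ((p ^ (r - 1) : ℕ) : ℂ) ≠ 0 := Nat.cast_ne_zero.mpr (pow_ne_zero _ hp.pos.ne')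
    have hp2c : ((p ^ r : ℕ) : ℂ) ≠ 0 := Nat.cast_ne_zero.mpr (pow_ne_zero _ hp.pos.ne')
    have hFC : ((∑ k ∈ Finset.Icc 1 (r - 1),
          (c₀ : ℤ) * (-1) ^ (k + 1) * (kinv k : ℤ) * ((p : ℤ) * w * z) ^ k : ℤ) : ℂ)
        = (p : ℂ) * (c₀ : ℂ) * ((s.val : ℕ) : ℂ) - ((p ^ r : ℕ) : ℂ) * (d : ℂ) := by
      exact_mod_cast congrArg (Int.cast : ℤ → ℂ) hFint
    have hppow : ((p ^ r : ℕ) : ℂ) = (p : ℂ) * ((p ^ (r - 1) : ℕ) : ℂ) := by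
      push_cast
      rw [← pow_succ', show r - 1 + 1 = r by omega]
    have harg : 2 * (Real.pi : ℂ) * Complex.I * ((∑ k ∈ Finset.Icc 1 (r - 1),
          (c₀ : ℤ) * (-1) ^ (k + 1) * (kinv k : ℤ) * ((p : ℤ) * w * z) ^ k : ℤ) : ℂ)
          / ((p ^ r : ℕ) : ℂ)
        = ((c₀ * s.val : ℕ) : ℂ) * (2 * (Real.pi : ℂ) * Complex.I / ((p ^ (r - 1) : ℕ) : ℂ))
          + ((-d : ℤ) : ℂ) * (2 * (Real.pi : ℂ) * Complex.I) := by
      rw [hFC, hppow]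
      have hpc : (p : ℂ) ≠ 0 := Nat.cast_ne_zero.mpr hp.pos.ne'
      field_simp
      push_cast
      ring
    rw [harg, Complex.exp_add, Complex.exp_int_mul_two_pi_mul_I, mul_one,
      ← Complex.exp_nat_mul]
end
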